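/- arXiv:1601.01501 — 6 statements merged into one kernel-verified Lean document; each statement's English description precedes it below -/
import Mathlib

section
/- Let (u_I) be a family of elements of a commutative ring indexed by subsets I of a finite set J, and define partial cumulants κ_H(u) = ∑_{π ∈ P(H)} μ(π,{H}) · ∏_{B ∈ π} u_B for nonempty H ⊆ J. Then for every nonempty H ⊆ J one has the inversion u_H = ∑_{π ∈ P(H)} ∏_{B ∈ π} κ_B(u). -/
open scoped BigOperators

open Finset

open Finset

namespace MCAux

/-- Möbius coefficient of the partition lattice. -/
def mu (n : ℕ) : ℤ := (-1) ^ (n - 1) * (n - 1).factorial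

variable {α : Type*} [DecidableEq α]

lemma avoid_parts_of_mem {s : Finset α} (ρ : Finpartition s) {B : Finset α}
    (hB : B ∈ ρ.parts) : (ρ.avoid B).parts = ρ.parts.erase B := by
  ext C
  rw [Finpartition.mem_avoid, mem_erase]
  constructor
  · rintro ⟨d, hd, hdB, rfl⟩
    have hdne : d ≠ B := by rintro rfl; exact hdB le_rfl
    have : Disjoint d B := ρ.disjoint hd hB hdne
    rw [sdiff_eq_self_of_disjoint this]
    exact ⟨hdne, hd⟩
  · rintro ⟨hCB, hC⟩
    refine ⟨C, hC, ?_, ?_⟩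
    · intro hle
      exact (ρ.ne_bot hC) ((ρ.disjoint hC hB hCB).eq_bot_of_le hle)
    · exact sdiff_eq_self_of_disjoint (ρ.disjoint hC hB hCB)

/-- Add a block `B` to a partition of `s \ B`. -/
def insertPart {s B : Finset α} (hB : B.Nonempty) (hBs : B ⊆ s)
    (τ : Finpartition (s \ B)) : Finpartition s :=
  τ.extend (by simpa [Finset.bot_eq_empty, ← Finset.nonempty_iff_ne_empty] using hB)
    (disjoint_sdiff_self_left) (by rw [sup_eq_union, sdiff_union_of_subset hBs])

lemma insertPart_parts {s B : Finset α} (hB : B.Nonempty) (hBs : B ⊆ s)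
    (τ : Finpartition (s \ B)) : (insertPart hB hBs τ).parts = insert B τ.parts := rfl

/-- Kernel sum. -/
def G (s : Finset α) : ℤ := ∑ ρ : Finpartition s, ∏ B ∈ ρ.parts, mu B.card

lemma G_empty : G (∅ : Finset α) = 1 := by
  have hu : ∀ ρ : Finpartition (∅ : Finset α), ρ.parts = ∅ := fun ρ =>
    Finpartition.parts_eq_empty_iff.mpr (by simp [Finset.bot_eq_empty])
  haveI : Unique (Finpartition (∅ : Finset α)) :=
    { default := ⊥
      uniq := fun ρ => by ext C; simp [hu] }
  rw [G, Fintype.sum_unique, hu, prod_empty]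

lemma G_eq (s : Finset α) : G s = if s.card ≤ 1 then 1 else 0 := by
  induction s using Finset.strongInduction with
  | _ s ih =>
    rcases s.eq_empty_or_nonempty with rfl | ⟨a, ha⟩
    · simp [G_empty]
    have hn1 : 1 ≤ s.card := card_pos.mpr ⟨a, ha⟩
    -- group partitions by the block containing `a`
    set T : Finset (Finset α) := s.powerset.filter (fun B => a ∈ B) with hT
    have hmaps : ∀ ρ : Finpartition s, ρ ∈ (univ : Finset (Finpartition s)) →
        ρ.part a ∈ T := by
      intro ρ _
      rw [hT, mem_filter, mem_powerset]
      exact ⟨ρ.le (ρ.part_mem.2 ha), ρ.mem_part ha⟩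
    have hstep : G s = ∑ B ∈ T, mu B.card * G (s \ B) := by
      rw [G, ← Finset.sum_fiberwise_of_maps_to hmaps]
      refine Finset.sum_congr rfl fun B hB => ?_
      rw [hT, mem_filter, mem_powerset] at hB
      obtain ⟨hBs, haB⟩ := hB
      have hBne : B.Nonempty := ⟨a, haB⟩
      rw [G, mul_sum]
      refine Finset.sum_nbij' (fun ρ => ρ.avoid B) (fun τ => insertPart hBne hBs τ)
        ?_ ?_ ?_ ?_ ?_
      · intro ρ _; exact mem_univ _
      · intro τ _
        simp only [mem_filter, mem_univ, true_and]
        exact Finpartition.part_eq_of_mem _ (by rw [insertPart_parts]; exact mem_insert_self _ _) haB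
      · intro ρ hρ
        simp only [mem_filter, mem_univ, true_and] at hρ
        have hBmem : B ∈ ρ.parts := hρ ▸ ρ.part_mem.2 ha
        ext C
        rw [insertPart_parts, avoid_parts_of_mem ρ hBmem, insert_erase hBmem]
      · intro τ _
        have hBnm : B ∉ τ.parts := by
          intro h
          have := τ.le h
          have : a ∈ s \ B := this (by exact haB)
          simp [haB] at this
        ext C
        rw [avoid_parts_of_mem _ (by rw [insertPart_parts]; exact mem_insert_self _ _),
          insertPart_parts, erase_insert hBnm]
      · intro ρ hρ
        simp only [mem_filter, mem_univ, true_and] at hρ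
        have hBmem : B ∈ ρ.parts := hρ ▸ ρ.part_mem.2 ha
        rw [avoid_parts_of_mem ρ hBmem, ← Finset.mul_prod_erase _ _ hBmem]
    -- rewrite using induction hypothesis
    have hstep2 : G s = ∑ B ∈ T, (if B = s then mu s.card else
        if B.card + 1 = s.card then mu (s.card - 1) else 0) := by
      rw [hstep]
      refine Finset.sum_congr rfl fun B hB => ?_
      rw [hT, mem_filter, mem_powerset] at hB
      obtain ⟨hBs, haB⟩ := hB
      have hsub : s \ B ⊂ s := sdiff_ssubset hBs ⟨a, haB⟩
      rw [ih _ hsub, card_sdiff_of_subset hBs]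
      have hcard : B.card ≤ s.card := card_le_card hBs
      by_cases hBeq : B = s
      · subst hBeq; simp
      · have hlt : B.card < s.card :=
          card_lt_card (lt_of_le_of_ne hBs (fun h => hBeq (by exact_mod_cast h)))
        rw [if_neg hBeq]
        by_cases h1 : B.card + 1 = s.card
        · rw [if_pos h1, if_pos (by omega), mul_one]
          congr 1
          omega
        · rw [if_neg h1, if_neg (by omega), mul_zero]
    have hsT : s ∈ T := by rw [hT, mem_filter, mem_powerset]; exact ⟨le_rfl, ha⟩
    rw [hstep2, ← Finset.add_sum_erase _ _ hsT, if_pos rfl]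
    have herase : ∀ B ∈ T.erase s, (if B = s then mu s.card else
        if B.card + 1 = s.card then mu (s.card - 1) else 0)
        = if B.card + 1 = s.card then mu (s.card - 1) else 0 := by
      intro B hB
      rw [if_neg (mem_erase.mp hB).1]
    rw [Finset.sum_congr rfl herase, ← Finset.sum_filter]
    have hcount : ((T.erase s).filter (fun B => B.card + 1 = s.card)).card
        = s.card - 1 := by
      rw [← card_erase_of_mem ha]
      refine Finset.card_bij (fun x _ => s.erase x) ?_ ?_ ?_ |>.symm
      · intro x hx
        rw [mem_erase] at hx
        rw [mem_filter, mem_erase]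
        refine ⟨⟨?_, ?_⟩, ?_⟩
        · intro h
          have hx' : x ∈ s := hx.2
          rw [← h] at hx'
          simp at hx'
        · rw [hT, mem_filter, mem_powerset]
          exact ⟨erase_subset _ _, mem_erase.mpr ⟨Ne.symm hx.1, ha⟩⟩
        · rw [card_erase_of_mem hx.2]; omega
      · intro x hx y hy hxy
        rw [mem_erase] at hx hy
        by_contra hne
        have hmem : x ∈ s.erase y := mem_erase.mpr ⟨hne, hx.2⟩
        rw [← hxy] at hmem
        simp at hmem
      · intro B hB
        rw [mem_filter, mem_erase] at hB
        obtain ⟨⟨hBne, hBT⟩, hBcard⟩ := hB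
        rw [hT, mem_filter, mem_powerset] at hBT
        obtain ⟨hBs, haB⟩ := hBT
        have hcard1 : (s \ B).card = 1 := by
          rw [card_sdiff_of_subset hBs]; omega
        obtain ⟨x, hx⟩ := card_eq_one.mp hcard1
        have hxmem : x ∈ s \ B := hx ▸ mem_singleton_self x
        rw [mem_sdiff] at hxmem
        refine ⟨x, mem_erase.mpr ⟨fun h => hxmem.2 (h ▸ haB), hxmem.1⟩, ?_⟩
        refine (Finset.eq_of_subset_of_card_le ?_ ?_).symm
        · intro y hy
          rw [mem_erase]
          refine ⟨fun h => hxmem.2 (h ▸ hy), hBs hy⟩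
        · rw [card_erase_of_mem hxmem.1]; omega
    rw [Finset.sum_const, hcount, nsmul_eq_mul]
    -- now: mu s.card + (s.card - 1) * mu (s.card - 1) = if s.card ≤ 1 then 1 else 0
    rcases Nat.lt_or_ge s.card 2 with h2 | h2
    · have : s.card = 1 := by omega
      rw [this]
      norm_num [mu]
    · rw [if_neg (by omega)]
      obtain ⟨m, hm⟩ : ∃ m, s.card = m + 2 := ⟨s.card - 2, by omega⟩
      rw [hm]
      have h1 : m + 2 - 1 = m + 1 := rfl
      have h2' : m + 1 - 1 = m := rfl
      rw [mu, mu, h1, h2']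
      push_cast [Nat.factorial_succ, pow_succ]
      ring

end MCAux

namespace MCAux

variable {α : Type*} [DecidableEq α] {H : Finset α}

lemma parts_disj (π : Finpartition H) (p : ∀ B ∈ π.parts, Finpartition B)
    {B B' : Finset α} (hB : B ∈ π.parts) (hB' : B' ∈ π.parts) (hne : B ≠ B') :
    Disjoint (p B hB).parts (p B' hB').parts := by
  rw [Finset.disjoint_left]
  intro C hC hC'
  have h1 : C ≤ B := (p B hB).le hC
  have h2 : C ≤ B' := (p B' hB').le hC'
  exact (p B hB).ne_bot hC (le_bot_iff.mp ((π.disjoint hB hB' hne) h1 h2))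

end MCAux

namespace MCAux2
open MCAux

variable {α : Type*} [DecidableEq α] {H : Finset α}

/-- Group the blocks of the refinement: the partition of `(π.bind p).parts` whose
blocks are the families `(p B _).parts` for `B ∈ π.parts`. -/
def grouping (π : Finpartition H) (p : ∀ B ∈ π.parts, Finpartition B) :
    Finpartition ((π.bind p).parts) where
  parts := π.parts.attach.image (fun B => (p B.1 B.2).parts)
  supIndep := by
    rw [Finset.supIndep_iff_pairwiseDisjoint]
    intro T hT T' hT' hne
    simp only [Finset.coe_image, Set.mem_image, mem_coe, mem_attach] at hT hT'
    obtain ⟨⟨B, hB⟩, -, rfl⟩ := hT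
    obtain ⟨⟨B', hB'⟩, -, rfl⟩ := hT'
    have hBB' : B ≠ B' := by rintro rfl; exact hne rfl
    exact parts_disj π p hB hB' hBB'
  sup_parts := by
    rw [Finset.sup_image]
    simp only [Function.id_comp]
    rw [Finset.sup_eq_biUnion]
    rfl
  bot_notMem := by
    intro h
    simp only [mem_image, mem_attach, true_and] at h
    obtain ⟨⟨B, hB⟩, hBp⟩ := h
    have : B = ⊥ := (p B hB).parts_eq_empty_iff.mp (by simpa using hBp)
    exact π.bot_notMem (this ▸ hB)

lemma grouping_parts (π : Finpartition H) (p : ∀ B ∈ π.parts, Finpartition B) :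
    (grouping π p).parts = π.parts.attach.image (fun B => (p B.1 B.2).parts) := rfl

/-- The coarser partition of `H` obtained from a partition `ρ` of the set of blocks of `σ`:
each block of `ρ` (a set of blocks of `σ`) is merged into a single block. -/
def joinOf (σ : Finpartition H) (ρ : Finpartition σ.parts) : Finpartition H where
  parts := ρ.parts.image (fun T => T.sup id)
  supIndep := by
    rw [Finset.supIndep_iff_pairwiseDisjoint]
    intro b hb b' hb' hne
    simp only [Finset.coe_image, Set.mem_image, mem_coe] at hb hb'
    obtain ⟨T, hT, rfl⟩ := hb
    obtain ⟨T', hT', rfl⟩ := hb'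
    have hTT' : T ≠ T' := by rintro rfl; exact hne rfl
    show Disjoint (T.sup id) (T'.sup id)
    rw [Finset.disjoint_left]
    intro x hx hx'
    simp only [Finset.mem_sup, id] at hx hx'
    obtain ⟨C, hC, hxC⟩ := hx
    obtain ⟨C', hC', hxC'⟩ := hx'
    have hCσ : C ∈ σ.parts := ρ.le hT hC
    have hC'σ : C' ∈ σ.parts := ρ.le hT' hC'
    have : C = C' := σ.eq_of_mem_parts hCσ hC'σ hxC hxC'
    subst this
    exact (Finset.disjoint_left.mp (ρ.disjoint hT hT' hTT') hC) hC'
  sup_parts := by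
    rw [Finset.sup_image]
    simp only [Function.id_comp]
    have h1 : σ.parts = ρ.parts.biUnion id := ρ.biUnion_parts.symm
    have h2 : σ.parts.sup id = H := σ.sup_parts
    rw [h1, Finset.sup_biUnion] at h2
    exact h2
  bot_notMem := by
    intro h
    simp only [mem_image] at h
    obtain ⟨T, hT, hTsup⟩ := h
    obtain ⟨C, hC⟩ := (Finpartition.nonempty_of_mem_parts ρ hT)
    have hCσ : C ∈ σ.parts := ρ.le hT hC
    obtain ⟨x, hx⟩ := σ.nonempty_of_mem_parts hCσ
    have : x ∈ T.sup id := Finset.mem_sup.mpr ⟨C, hC, hx⟩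
    rw [hTsup] at this
    simp at this

lemma joinOf_parts (σ : Finpartition H) (ρ : Finpartition σ.parts) :
    (joinOf σ ρ).parts = ρ.parts.image (fun T => T.sup id) := rfl

/-- For `T` a block of `ρ`, the σ-blocks contained in `⋃ T` are exactly the members of `T`. -/
lemma filter_subset_sup (σ : Finpartition H) (ρ : Finpartition σ.parts)
    {T : Finset (Finset α)} (hT : T ∈ ρ.parts) :
    σ.parts.filter (· ⊆ T.sup id) = T := by
  ext C
  rw [mem_filter]
  constructor
  · rintro ⟨hCσ, hCsub⟩
    obtain ⟨x, hx⟩ := σ.nonempty_of_mem_parts hCσ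
    obtain ⟨D, hD, hxD⟩ := Finset.mem_sup.mp (hCsub hx)
    have hDσ : D ∈ σ.parts := ρ.le hT hD
    have : C = D := σ.eq_of_mem_parts hCσ hDσ hx hxD
    exact this ▸ hD
  · intro hC
    exact ⟨ρ.le hT hC, Finset.le_sup (f := id) hC⟩

lemma restrict_sup (σ : Finpartition H) (ρ : Finpartition σ.parts)
    {B : Finset α} (hB : B ∈ (joinOf σ ρ).parts) :
    (σ.parts.filter (· ⊆ B)).sup id = B := by
  rw [joinOf_parts, mem_image] at hB
  obtain ⟨T, hT, rfl⟩ := hB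
  rw [filter_subset_sup σ ρ hT]

/-- Restriction of `σ` to a block `B` of `joinOf σ ρ`. -/
def restrict (σ : Finpartition H) (B : Finset α)
    (h : (σ.parts.filter (· ⊆ B)).sup id = B) : Finpartition B :=
  σ.ofSubset (filter_subset _ _) h

lemma restrict_parts (σ : Finpartition H) (B : Finset α)
    (h : (σ.parts.filter (· ⊆ B)).sup id = B) :
    (restrict σ B h).parts = σ.parts.filter (· ⊆ B) := rfl

lemma filter_bind_parts (π : Finpartition H) (p : ∀ B ∈ π.parts, Finpartition B)
    {B : Finset α} (hB : B ∈ π.parts) :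
    (π.bind p).parts.filter (· ⊆ B) = (p B hB).parts := by
  ext C
  rw [mem_filter, Finpartition.mem_bind]
  constructor
  · rintro ⟨⟨B', hB', hC⟩, hCB⟩
    rcases eq_or_ne B' B with rfl | hne
    · exact hC
    · have h1 : C ≤ B' := (p B' hB').le hC
      have hbot : C = ⊥ := le_bot_iff.mp ((π.disjoint hB' hB hne) h1 hCB)
      exact absurd hbot ((p B' hB').ne_bot hC)
  · intro hC
    exact ⟨⟨B, hB, hC⟩, (p B hB).le hC⟩

lemma joinOf_grouping (π : Finpartition H) (p : ∀ B ∈ π.parts, Finpartition B) :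
    joinOf (π.bind p) (grouping π p) = π := by
  ext1
  rw [joinOf_parts, grouping_parts, Finset.image_image]
  have : ∀ B ∈ π.parts.attach, ((p B.1 B.2).parts.sup id) = B.1 := fun B _ =>
    (p B.1 B.2).sup_parts
  rw [show ((fun T => T.sup id) ∘ fun B : {x // x ∈ π.parts} => (p B.1 B.2).parts)
      = (fun B : {x // x ∈ π.parts} => (p B.1 B.2).parts.sup id) from rfl]
  rw [Finset.image_congr (fun B hB => this B hB)]
  exact Finset.attach_image_val

lemma bind_restrict (σ : Finpartition H) (ρ : Finpartition σ.parts) :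
    (joinOf σ ρ).bind (fun B hB => restrict σ B (restrict_sup σ ρ hB)) = σ := by
  ext1
  ext C
  rw [Finpartition.mem_bind]
  constructor
  · rintro ⟨B, hB, hC⟩
    rw [restrict_parts, mem_filter] at hC
    exact hC.1
  · intro hC
    obtain ⟨T, hT, hCT⟩ := ρ.exists_mem hC
    refine ⟨T.sup id, ?_, ?_⟩
    · rw [joinOf_parts]
      exact mem_image_of_mem _ hT
    · rw [restrict_parts, mem_filter]
      exact ⟨hC, Finset.le_sup (f := id) hCT⟩

lemma grouping_restrict (σ : Finpartition H) (ρ : Finpartition σ.parts) :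
    (grouping (joinOf σ ρ) (fun B hB => restrict σ B (restrict_sup σ ρ hB))).parts
      = ρ.parts := by
  rw [grouping_parts]
  ext T'
  simp only [mem_image, mem_attach, true_and, Subtype.exists]
  constructor
  · rintro ⟨B, hB, rfl⟩
    have hB' := hB
    rw [joinOf_parts, mem_image] at hB'
    obtain ⟨T, hT, rfl⟩ := hB'
    rw [restrict_parts, filter_subset_sup σ ρ hT]
    exact hT
  · intro hT'
    have hB : T'.sup id ∈ (joinOf σ ρ).parts := by
      rw [joinOf_parts]; exact mem_image_of_mem _ hT'
    refine ⟨T'.sup id, hB, ?_⟩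
    rw [restrict_parts, filter_subset_sup σ ρ hT']

lemma sigmaPi_ext {a b : Σ π : Finpartition H, ∀ B ∈ π.parts, Finpartition B}
    (h1 : a.1 = b.1) (h2 : ∀ B hB hB', a.2 B hB = b.2 B hB') : a = b := by
  obtain ⟨π, p⟩ := a
  obtain ⟨π', p'⟩ := b
  simp only at h1
  subst h1
  simp only [Sigma.mk.inj_iff, heq_eq_eq, true_and]
  funext B hB
  exact h2 B hB hB

lemma sigmaPart_ext {a b : Σ σ : Finpartition H, Finpartition σ.parts}
    (h1 : a.1 = b.1) (h2 : a.2.parts = b.2.parts) : a = b := by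
  obtain ⟨σ, ρ⟩ := a
  obtain ⟨σ', ρ'⟩ := b
  simp only at h1
  subst h1
  simp only [Sigma.mk.inj_iff, heq_eq_eq, true_and]
  exact Finpartition.ext h2

end MCAux2

open scoped BigOperators
open MCAux MCAux2

/-- Partial cumulants of a family `u` indexed by finite subsets of `J`:
`κ_H(u) = ∑_{π ∈ P(H)} μ(π,{H}) · ∏_{B ∈ π} u_B`, where
`μ(π,{H}) = (-1)^(#(π)-1)·(#(π)-1)!`. -/
noncomputable def partialCumulant {J R : Type*} [DecidableEq J] [CommRing R]
    (u : Finset J → R) (H : Finset J) : R :=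
  ∑ᶠ π : Finpartition H,
    (((-1 : ℤ) ^ (π.parts.card - 1) * (π.parts.card - 1).factorial : ℤ)) •
      ∏ B ∈ π.parts, u B

/-- Moment–cumulant inversion: for every nonempty `H ⊆ J`,
`u_H = ∑_{π ∈ P(H)} ∏_{B ∈ π} κ_B(u)`. -/
theorem stmt_4 {J R : Type*} [DecidableEq J] [CommRing R]
    (u : Finset J → R) (H : Finset J) (hH : H.Nonempty) :
    u H = ∑ᶠ π : Finpartition H, ∏ B ∈ π.parts, partialCumulant u B := by
  classical
  rw [finsum_eq_sum_of_fintype]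
  have step1 : ∀ B : Finset J, partialCumulant u B
      = ∑ σ : Finpartition B, ((mu σ.parts.card : ℤ) : R) * ∏ C ∈ σ.parts, u C := by
    intro B
    rw [partialCumulant, finsum_eq_sum_of_fintype]
    refine Finset.sum_congr rfl fun σ _ => ?_
    rw [zsmul_eq_mul]
    rfl
  symm
  calc ∑ π : Finpartition H, ∏ B ∈ π.parts, partialCumulant u B
      = ∑ π : Finpartition H, ∑ p ∈ π.parts.pi (fun B => (univ : Finset (Finpartition B))),
          ∏ x ∈ π.parts.attach, (((mu (p x.1 x.2).parts.card : ℤ) : R)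
            * ∏ C ∈ (p x.1 x.2).parts, u C) := by
        refine Finset.sum_congr rfl fun π _ => ?_
        rw [show ∏ B ∈ π.parts, partialCumulant u B
            = ∏ B ∈ π.parts, ∑ σ : Finpartition B,
                ((mu σ.parts.card : ℤ) : R) * ∏ C ∈ σ.parts, u C
          from Finset.prod_congr rfl fun B _ => step1 B]
        exact Finset.prod_sum _ _ _
    _ = ∑ x ∈ (univ : Finset (Finpartition H)).sigma
          (fun π => π.parts.pi (fun B => (univ : Finset (Finpartition B)))),
          ∏ y ∈ x.1.parts.attach, (((mu (x.2 y.1 y.2).parts.card : ℤ) : R)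
            * ∏ C ∈ (x.2 y.1 y.2).parts, u C) := by
        rw [Finset.sum_sigma']
    _ = ∑ z ∈ (univ : Finset (Finpartition H)).sigma
          (fun σ => (univ : Finset (Finpartition σ.parts))),
          ((∏ T ∈ z.2.parts, ((mu T.card : ℤ) : R)) * ∏ C ∈ z.1.parts, u C) := by
        refine Finset.sum_nbij'
          (fun x => ⟨x.1.bind x.2, grouping x.1 x.2⟩)
          (fun z => ⟨joinOf z.1 z.2,
            fun B hB => restrict z.1 B (restrict_sup z.1 z.2 hB)⟩)
          (fun x _ => by simp) (fun z _ => by simp [Finset.mem_sigma, Finset.mem_pi]) ?_ ?_ ?_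
        · -- left inverse
          rintro ⟨π, p⟩ -
          refine sigmaPi_ext ?_ ?_
          · exact joinOf_grouping π p
          · intro B hB hB'
            ext1
            rw [restrict_parts]
            exact filter_bind_parts π p hB'
        · -- right inverse
          rintro ⟨σ, ρ⟩ -
          refine sigmaPart_ext ?_ ?_
          · exact bind_restrict σ ρ
          · exact grouping_restrict σ ρ
        · -- values
          rintro ⟨π, p⟩ -
          simp only
          rw [Finset.prod_mul_distrib]
          congr 1
          · -- coefficients
            rw [grouping_parts, Finset.prod_image ?_]
            intro x _ y _ hxy
            by_contra hne
            have hne' : x.1 ≠ y.1 := fun h => hne (Subtype.ext h)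
            have hd := parts_disj π p x.2 y.2 hne'
            obtain ⟨C, hC⟩ := (p x.1 x.2).parts_nonempty
              (by simpa [Finset.bot_eq_empty, ← Finset.nonempty_iff_ne_empty]
                using π.nonempty_of_mem_parts x.2)
            exact (Finset.disjoint_left.mp hd hC) ((show (p x.1 x.2).parts = (p y.1 y.2).parts from hxy) ▸ hC)
          · -- products of u
            exact (Finset.prod_biUnion fun x _ y _ hxy =>
              parts_disj π p x.2 y.2 (fun h => hxy (Subtype.ext h))).symm
    _ = ∑ σ : Finpartition H, ∑ ρ : Finpartition σ.parts,
          ((∏ T ∈ ρ.parts, ((mu T.card : ℤ) : R)) * ∏ C ∈ σ.parts, u C) := by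
        exact Finset.sum_sigma _ _ _
    _ = ∑ σ : Finpartition H, ((G σ.parts : ℤ) : R) * ∏ C ∈ σ.parts, u C := by
        refine Finset.sum_congr rfl fun σ _ => ?_
        rw [← Finset.sum_mul]
        congr 1
        rw [G]
        push_cast
        rfl
    _ = u H := by
        have hHne : H ≠ ⊥ := by
          simpa [Finset.bot_eq_empty, ← Finset.nonempty_iff_ne_empty] using hH
        rw [Finset.sum_eq_single (Finpartition.indiscrete hHne)]
        · rw [G_eq]
          have hp : (Finpartition.indiscrete hHne).parts = {H} := rfl
          rw [hp]
          simp
        · intro σ _ hσ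
          rw [G_eq]
          have h0 : σ.parts.card ≠ 0 := by
            simpa using (σ.parts_nonempty hHne).card_pos.ne'
          rw [if_neg ?_, Int.cast_zero, zero_mul]
          intro hle
          have h1 : σ.parts.card = 1 := by omega
          obtain ⟨B, hB⟩ := Finset.card_eq_one.mp h1
          have : B = H := by
            have := σ.sup_parts
            rw [hB] at this
            simpa using this
          exact hσ (Finpartition.ext (by rw [hB, this]; rfl))
        · intro h
          exact absurd (Finset.mem_univ _) h
end

section
/- Let K be a finite set, R a field, and fix elements C ≠ 0 and (c_i)_{i∈K} in the field R(α) of rational functions in α, such that C, C⁻¹ and each c_i have no pole at α = 0. For I ⊆ K define v_I = C + α·∑_{i∈I} c_i. Then the alternating product ∏_{G ⊆ K} v_G^{(-1)^{|K|-|G|}} − 1, when written as a rational function of α, is divisible by α^{|K|} (i.e., equals α^{|K|} times a rational function with no pole at 0). -/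
open scoped BigOperators

/-- A rational function in `α` has no pole at `α = 0` iff its (reduced)
denominator does not vanish at `0`. -/
def NoPoleAtZero {F : Type*} [Field F] (f : RatFunc F) : Prop :=
  Polynomial.eval 0 f.denom ≠ 0

/-- `f = O(α^k)`: `f` equals `α^k` times a rational function with no pole
at `0`. -/
def IsBigO {F : Type*} [Field F] (k : ℕ) (f : RatFunc F) : Prop :=
  ∃ g : RatFunc F, NoPoleAtZero g ∧ f = RatFunc.X ^ k * g

namespace Stmt7Aux

variable {F : Type*} [Field F]

theorem np_of_eq_div {p q : Polynomial F} (hq : q.eval 0 ≠ 0) {f : RatFunc F}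
    (hf : f = algebraMap (Polynomial F) (RatFunc F) p / algebraMap _ _ q) :
    NoPoleAtZero f := by
  have hdvd : f.denom ∣ q := hf ▸ RatFunc.denom_div_dvd p q
  obtain ⟨r, hr⟩ := hdvd
  intro h0
  apply hq
  rw [hr, Polynomial.eval_mul, h0, zero_mul]

theorem mul_denom (f : RatFunc F) :
    f * algebraMap (Polynomial F) (RatFunc F) f.denom
      = algebraMap (Polynomial F) (RatFunc F) f.num := by
  exact ((div_eq_iff (RatFunc.algebraMap_ne_zero (RatFunc.denom_ne_zero f))).mp
    (RatFunc.num_div_denom f)).symm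

theorem np_add {f g : RatFunc F} (hf : NoPoleAtZero f) (hg : NoPoleAtZero g) :
    NoPoleAtZero (f + g) := by
  apply np_of_eq_div (p := f.num * g.denom + g.num * f.denom)
    (q := f.denom * g.denom)
  · simp only [Polynomial.eval_mul]
    exact mul_ne_zero hf hg
  · rw [eq_div_iff (by
      rw [map_mul]
      exact mul_ne_zero (RatFunc.algebraMap_ne_zero (RatFunc.denom_ne_zero f))
        (RatFunc.algebraMap_ne_zero (RatFunc.denom_ne_zero g)))]
    simp only [map_mul, map_add]
    rw [add_mul, ← mul_assoc, mul_denom f,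
      mul_comm (algebraMap (Polynomial F) (RatFunc F) f.denom)
        (algebraMap (Polynomial F) (RatFunc F) g.denom),
      ← mul_assoc, mul_denom g]

theorem np_mul {f g : RatFunc F} (hf : NoPoleAtZero f) (hg : NoPoleAtZero g) :
    NoPoleAtZero (f * g) := by
  apply np_of_eq_div (p := f.num * g.num) (q := f.denom * g.denom)
  · simp only [Polynomial.eval_mul]
    exact mul_ne_zero hf hg
  · rw [eq_div_iff (by
      rw [map_mul]
      exact mul_ne_zero (RatFunc.algebraMap_ne_zero (RatFunc.denom_ne_zero f))
        (RatFunc.algebraMap_ne_zero (RatFunc.denom_ne_zero g)))]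
    simp only [map_mul]
    rw [mul_mul_mul_comm, mul_denom f, mul_denom g]

theorem np_one : NoPoleAtZero (1 : RatFunc F) := by
  intro h
  simp [RatFunc.denom_one] at h

theorem np_zero : NoPoleAtZero (0 : RatFunc F) := by
  intro h
  simp [RatFunc.denom_zero] at h

theorem np_neg {f : RatFunc F} (hf : NoPoleAtZero f) : NoPoleAtZero (-f) := by
  apply np_of_eq_div (p := -f.num) (q := f.denom) hf
  rw [map_neg, neg_div, RatFunc.num_div_denom]

theorem np_algebraMap (p : Polynomial F) :
    NoPoleAtZero (algebraMap (Polynomial F) (RatFunc F) p) := by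
  intro h
  rw [RatFunc.denom_algebraMap] at h
  simp at h

theorem np_X : NoPoleAtZero (RatFunc.X : RatFunc F) := by
  rw [← RatFunc.algebraMap_X]
  exact np_algebraMap _

end Stmt7Aux
namespace Stmt7Aux

variable {F : Type*} [Field F]

/-- The subring of rational functions with no pole at `0`. -/
def npSubring (F : Type*) [Field F] : Subring (RatFunc F) where
  carrier := {f | NoPoleAtZero f}
  one_mem' := np_one
  mul_mem' := np_mul
  zero_mem' := np_zero
  add_mem' := np_add
  neg_mem' := np_neg

/-- "Unit at zero": quotient of two polynomials both nonvanishing at `0`. -/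
def GoodAtZero (f : RatFunc F) : Prop :=
  ∃ p q : Polynomial F, p.eval 0 ≠ 0 ∧ q.eval 0 ≠ 0 ∧
    f = algebraMap (Polynomial F) (RatFunc F) p / algebraMap _ _ q

theorem GoodAtZero.np {f : RatFunc F} (h : GoodAtZero f) : NoPoleAtZero f := by
  obtain ⟨p, q, _, hq, hf⟩ := h
  exact np_of_eq_div hq hf

theorem GoodAtZero.ne_zero {f : RatFunc F} (h : GoodAtZero f) : f ≠ 0 := by
  obtain ⟨p, q, hp, hq, hf⟩ := h
  rw [hf]
  apply div_ne_zero
  · exact RatFunc.algebraMap_ne_zero (fun h0 => hp (by simp [h0]))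
  · exact RatFunc.algebraMap_ne_zero (fun h0 => hq (by simp [h0]))

theorem GoodAtZero.inv {f : RatFunc F} (h : GoodAtZero f) : GoodAtZero f⁻¹ := by
  obtain ⟨p, q, hp, hq, hf⟩ := h
  exact ⟨q, p, hq, hp, by rw [hf, inv_div]⟩

theorem GoodAtZero.mul {f g : RatFunc F} (hf : GoodAtZero f) (hg : GoodAtZero g) :
    GoodAtZero (f * g) := by
  obtain ⟨p, q, hp, hq, hfe⟩ := hf
  obtain ⟨p', q', hp', hq', hge⟩ := hg
  refine ⟨p * p', q * q', ?_, ?_, ?_⟩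
  · simp only [Polynomial.eval_mul]; exact mul_ne_zero hp hp'
  · simp only [Polynomial.eval_mul]; exact mul_ne_zero hq hq'
  · rw [hfe, hge, map_mul, map_mul, div_mul_div_comm]

theorem GoodAtZero.one : GoodAtZero (1 : RatFunc F) :=
  ⟨1, 1, by simp, by simp, by simp⟩

/-- `C` is a unit at zero. -/
theorem goodAtZero_of (C : RatFunc F) (hC0 : C ≠ 0) (hC : NoPoleAtZero C)
    (hCinv : NoPoleAtZero C⁻¹) : GoodAtZero C := by
  refine ⟨C.num, C.denom, ?_, hC, (RatFunc.num_div_denom C).symm⟩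
  intro h0
  have hXp : (Polynomial.X : Polynomial F) ∣ C.num := by
    rw [Polynomial.X_dvd_iff, Polynomial.coeff_zero_eq_eval_zero]
    exact h0
  have hnum : C.num ≠ 0 := RatFunc.num_ne_zero hC0
  have e1 : (C⁻¹ : RatFunc F)
      = algebraMap (Polynomial F) (RatFunc F) C.denom / algebraMap _ _ C.num := by
    conv_lhs => rw [← RatFunc.num_div_denom C]
    rw [inv_div]
  have e2 : algebraMap (Polynomial F) (RatFunc F) (C⁻¹).num
        / algebraMap (Polynomial F) (RatFunc F) (C⁻¹).denom
      = algebraMap (Polynomial F) (RatFunc F) C.denom / algebraMap _ _ C.num := by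
    rw [RatFunc.num_div_denom, e1]
  rw [div_eq_div_iff (RatFunc.algebraMap_ne_zero (RatFunc.denom_ne_zero C⁻¹))
    (RatFunc.algebraMap_ne_zero hnum), ← map_mul, ← map_mul] at e2
  have ecross : (C⁻¹).num * C.num = C.denom * (C⁻¹).denom :=
    RatFunc.algebraMap_injective F e2
  have hdvd : (Polynomial.X : Polynomial F) ∣ C.denom * (C⁻¹).denom := by
    rw [← ecross]
    exact hXp.mul_left _
  rcases (Polynomial.prime_X).2.2 _ _ hdvd with h | h <;>
    rw [Polynomial.X_dvd_iff, Polynomial.coeff_zero_eq_eval_zero] at h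
  · exact hC h
  · exact hCinv h

end Stmt7Aux
namespace Stmt7Aux

theorem comp_sub_dvd {A : Type*} [CommRing A] (x b : A) (Q : Polynomial A) :
    Polynomial.C x ∣ Q.comp (Polynomial.X + Polynomial.C (x * b)) - Q := by
  have hkey : ∀ r : Polynomial A,
      (Q.map (Polynomial.C : A →+* Polynomial A)).eval r = Q.comp r := by
    intro r
    rw [Polynomial.eval_map]
    rfl
  have h := Polynomial.sub_dvd_eval_sub (Polynomial.X + Polynomial.C (x * b)) Polynomial.X
      (Q.map (Polynomial.C : A →+* Polynomial A))
  rw [hkey, hkey, Polynomial.comp_X, add_sub_cancel_left] at h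
  exact dvd_trans ⟨Polynomial.C b, map_mul Polynomial.C x b⟩ h

variable {A ι : Type*} [CommRing A] [DecidableEq ι]

theorem key (x : A) (c : ι → A) (K : Finset ι) :
    (Polynomial.C x) ^ K.card ∣
      (∏ G ∈ K.powerset.filter (fun G => Even (K.card - G.card)),
        (Polynomial.X + Polynomial.C (x * ∑ i ∈ G, c i)))
      - ∏ G ∈ K.powerset.filter (fun G => ¬ Even (K.card - G.card)),
        (Polynomial.X + Polynomial.C (x * ∑ i ∈ G, c i)) := by
  induction K using Finset.induction_on with
  | empty => simpa using one_dvd _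
  | @insert a s ha ih =>
    classical
    set σ : Polynomial A := Polynomial.X + Polynomial.C (x * c a) with hσ
    set Pe : Polynomial A := ∏ G ∈ s.powerset.filter (fun G => Even (s.card - G.card)),
        (Polynomial.X + Polynomial.C (x * ∑ i ∈ G, c i)) with hPe_def
    set Po : Polynomial A := ∏ G ∈ s.powerset.filter (fun G => ¬ Even (s.card - G.card)),
        (Polynomial.X + Polynomial.C (x * ∑ i ∈ G, c i)) with hPo_def
    -- decompose the filtered powersets
    have hcard : ∀ G ∈ s.powerset, (insert a s).card - G.card = (s.card - G.card) + 1 := by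
      intro G hG
      rw [Finset.card_insert_of_notMem ha,
        Nat.succ_sub (Finset.card_le_card (Finset.mem_powerset.mp hG))]
    have hcard2 : ∀ G ∈ s.powerset,
        (insert a s).card - (insert a G).card = s.card - G.card := by
      intro G hG
      rw [Finset.card_insert_of_notMem ha, Finset.card_insert_of_notMem
        (fun h => ha (Finset.mem_powerset.mp hG h)), Nat.succ_sub_succ]
    have hdecomp : ∀ P : ℕ → Prop, ∀ _ : DecidablePred P,
        (insert a s).powerset.filter (fun G => P ((insert a s).card - G.card))
        = (s.powerset.filter (fun G => P ((s.card - G.card) + 1)))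
          ∪ (s.powerset.filter (fun G => P (s.card - G.card))).image (insert a) := by
      intro P hP
      rw [Finset.powerset_insert, Finset.filter_union, Finset.filter_image]
      congr 1
      · exact Finset.filter_congr (fun G hG => by rw [hcard G hG])
      · congr 1
        exact Finset.filter_congr (fun G hG => by rw [hcard2 G hG])
    have hdisj : ∀ t u : Finset (Finset ι), t ⊆ s.powerset →
        Disjoint t (u.image (insert a)) := by
      intro t u ht
      rw [Finset.disjoint_left]
      rintro G hG hG'
      obtain ⟨G', _, rfl⟩ := Finset.mem_image.mp hG'
      exact ha (Finset.mem_powerset.mp (ht hG) (Finset.mem_insert_self a G'))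
    have hinj : ∀ u : Finset (Finset ι), u ⊆ s.powerset →
        ∀ G ∈ u, ∀ G' ∈ u, insert a G = insert a G' → G = G' := by
      intro u hu G hG G' hG' h
      have haG : a ∉ G := fun hh => ha (Finset.mem_powerset.mp (hu hG) hh)
      have haG' : a ∉ G' := fun hh => ha (Finset.mem_powerset.mp (hu hG') hh)
      rw [← Finset.erase_insert haG, ← Finset.erase_insert haG', h]
    -- product over image-part equals comp with σ
    have himg : ∀ u : Finset (Finset ι), u ⊆ s.powerset →
        (∏ G ∈ u.image (insert a), (Polynomial.X + Polynomial.C (x * ∑ i ∈ G, c i)))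
        = (∏ G ∈ u, (Polynomial.X + Polynomial.C (x * ∑ i ∈ G, c i))).comp σ := by
      intro u hu
      rw [Finset.prod_image (hinj u hu), Polynomial.prod_comp]
      apply Finset.prod_congr rfl
      intro G hG
      have haG : a ∉ G := fun hh => ha (Finset.mem_powerset.mp (hu hG) hh)
      rw [Finset.sum_insert haG, Polynomial.add_comp, Polynomial.X_comp, Polynomial.C_comp,
        hσ, mul_add, Polynomial.C_add]
      ring
    have hEeq : (∏ G ∈ (insert a s).powerset.filter
          (fun G => Even ((insert a s).card - G.card)),
          (Polynomial.X + Polynomial.C (x * ∑ i ∈ G, c i)))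
        = Po * Pe.comp σ := by
      rw [hdecomp (fun n => Even n) inferInstance,
        Finset.prod_union (hdisj _ _ (Finset.filter_subset _ _)),
        himg _ (Finset.filter_subset _ _)]
      congr 2
      apply Finset.filter_congr
      intro G _
      simp [Nat.even_add_one]
    have hOeq : (∏ G ∈ (insert a s).powerset.filter
          (fun G => ¬ Even ((insert a s).card - G.card)),
          (Polynomial.X + Polynomial.C (x * ∑ i ∈ G, c i)))
        = Pe * Po.comp σ := by
      rw [hdecomp (fun n => ¬ Even n) inferInstance,
        Finset.prod_union (hdisj _ _ (Finset.filter_subset _ _)),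
        himg _ (Finset.filter_subset _ _)]
      congr 2
      apply Finset.filter_congr
      intro G _
      simp [Nat.even_add_one]
    rw [hEeq, hOeq, Finset.card_insert_of_notMem ha]
    obtain ⟨R, hR⟩ := ih
    obtain ⟨u, hu⟩ := comp_sub_dvd x (c a) R
    obtain ⟨w, hw⟩ := comp_sub_dvd x (c a) Po
    have hPe : Pe = Polynomial.C x ^ s.card * R + Po := by rw [← hR]; ring
    have hRc : R.comp σ = R + Polynomial.C x * u := by rw [← hu]; ring
    have hPoc : Po.comp σ = Po + Polynomial.C x * w := by rw [← hw]; ring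
    refine ⟨Po * u - R * w, ?_⟩
    rw [hPe, Polynomial.add_comp, Polynomial.mul_comp, Polynomial.pow_comp,
      Polynomial.C_comp, hRc, hPoc]
    ring

end Stmt7Aux
namespace Stmt7Aux

variable {F : Type*} [Field F]

theorem GoodAtZero.affine {Cf s : RatFunc F} (h : GoodAtZero Cf) (hs : NoPoleAtZero s) :
    GoodAtZero (Cf + RatFunc.X * s) := by
  obtain ⟨p, q, hp, hq, hCe⟩ := h
  have hq0 : q ≠ 0 := fun h0 => hq (by simp [h0])
  have hq' : algebraMap (Polynomial F) (RatFunc F) q ≠ 0 := RatFunc.algebraMap_ne_zero hq0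
  have hsd : algebraMap (Polynomial F) (RatFunc F) s.denom ≠ 0 :=
    RatFunc.algebraMap_ne_zero (RatFunc.denom_ne_zero s)
  refine ⟨p * s.denom + q * (Polynomial.X * s.num), q * s.denom, ?_, ?_, ?_⟩
  · simp only [Polynomial.eval_add, Polynomial.eval_mul, Polynomial.eval_X, zero_mul,
      mul_zero, add_zero]
    exact mul_ne_zero hp hs
  · simp only [Polynomial.eval_mul]
    exact mul_ne_zero hq hs
  · have hXs : RatFunc.X * s
        = algebraMap (Polynomial F) (RatFunc F) (Polynomial.X * s.num)
          / algebraMap (Polynomial F) (RatFunc F) s.denom := by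
      rw [eq_div_iff hsd, map_mul, RatFunc.algebraMap_X, mul_assoc, mul_denom s]
    rw [hCe, hXs, div_add_div _ _ hq' hsd]
    simp only [← map_mul, ← map_add]

end Stmt7Aux


/-- If `C ≠ 0`, `C`, `C⁻¹` and the `c_i` have no pole at `0`, and
`v_I = C + α·∑_{i∈I} c_i`, then
`∏_{G ⊆ K} v_G^{(-1)^{|K|-|G|}} − 1 = O(α^{|K|})`. -/

theorem stmt_7 {F ι : Type*} [Field F] [DecidableEq ι] (K : Finset ι)
    (C : RatFunc F) (c : ι → RatFunc F)
    (hC0 : C ≠ 0) (hC : NoPoleAtZero C) (hCinv : NoPoleAtZero C⁻¹)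
    (hc : ∀ i ∈ K, NoPoleAtZero (c i)) :
    IsBigO K.card
      ((∏ G ∈ K.powerset,
          (C + RatFunc.X * ∑ i ∈ G, c i) ^ ((-1 : ℤ) ^ (K.card - G.card)))
        - 1) := by
  classical
  set c' : ι → RatFunc F := fun i => if h : i ∈ K then c i else 0 with hc'def
  have hnpc' : ∀ i, NoPoleAtZero (c' i) := by
    intro i
    by_cases h : i ∈ K
    · have hci : c' i = c i := by simp [hc'def, h]
      rw [hci]; exact hc i h
    · have hci : c' i = 0 := by simp [hc'def, h]
      rw [hci]; exact Stmt7Aux.np_zero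
  have hgoalrw : (∏ G ∈ K.powerset,
        (C + RatFunc.X * ∑ i ∈ G, c i) ^ ((-1 : ℤ) ^ (K.card - G.card)))
      = ∏ G ∈ K.powerset,
        (C + RatFunc.X * ∑ i ∈ G, c' i) ^ ((-1 : ℤ) ^ (K.card - G.card)) := by
    apply Finset.prod_congr rfl
    intro G hG
    have hsum : (∑ i ∈ G, c i) = ∑ i ∈ G, c' i :=
      Finset.sum_congr rfl (fun i hi => by
        simp [hc'def, Finset.mem_powerset.mp hG hi])
    rw [hsum]
  rw [hgoalrw]
  -- move to the subring of functions with no pole at zero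
  set A := Stmt7Aux.npSubring F with hA
  let x0 : A := ⟨RatFunc.X, Stmt7Aux.np_X⟩
  let cc : ι → A := fun i => ⟨c' i, hnpc' i⟩
  let C0 : A := ⟨C, hC⟩
  have hk := Stmt7Aux.key (A := A) x0 cc K
  have hk2 : (x0 : A) ^ K.card ∣
      (∏ G ∈ K.powerset.filter (fun G => Even (K.card - G.card)),
        (C0 + x0 * ∑ i ∈ G, cc i))
      - ∏ G ∈ K.powerset.filter (fun G => ¬ Even (K.card - G.card)),
        (C0 + x0 * ∑ i ∈ G, cc i) := by
    have h2 := map_dvd (Polynomial.evalRingHom C0) hk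
    simp only [Polynomial.coe_evalRingHom] at h2
    simpa only [Polynomial.eval_sub, Polynomial.eval_pow, Polynomial.eval_C,
      Polynomial.eval_prod, Polynomial.eval_add, Polynomial.eval_X,
      Polynomial.eval_mul] using h2
  obtain ⟨g, hg⟩ := hk2
  have heq : (∏ G ∈ K.powerset.filter (fun G => Even (K.card - G.card)),
        (C + RatFunc.X * ∑ i ∈ G, c' i))
      - (∏ G ∈ K.powerset.filter (fun G => ¬ Even (K.card - G.card)),
        (C + RatFunc.X * ∑ i ∈ G, c' i))
      = RatFunc.X ^ K.card * (g : RatFunc F) := by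
    have h3 := congrArg (Stmt7Aux.npSubring F).subtype hg
    simpa only [map_sub, map_prod, map_add, map_mul, map_sum, map_pow,
      Subring.coe_subtype] using h3
  -- each factor is a unit at zero
  have hgood : ∀ G : Finset ι, Stmt7Aux.GoodAtZero (C + RatFunc.X * ∑ i ∈ G, c' i) := by
    intro G
    apply (Stmt7Aux.goodAtZero_of C hC0 hC hCinv).affine
    exact Finset.sum_induction c' NoPoleAtZero (fun a b => Stmt7Aux.np_add) Stmt7Aux.np_zero
      (fun i _ => hnpc' i)
  set Pe := ∏ G ∈ K.powerset.filter (fun G => Even (K.card - G.card)),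
    (C + RatFunc.X * ∑ i ∈ G, c' i) with hPe
  set Po := ∏ G ∈ K.powerset.filter (fun G => ¬ Even (K.card - G.card)),
    (C + RatFunc.X * ∑ i ∈ G, c' i) with hPo
  have hgoodPo : Stmt7Aux.GoodAtZero Po := by
    rw [hPo]
    exact Finset.prod_induction _ _ (fun a b ha hb => ha.mul hb) Stmt7Aux.GoodAtZero.one
      (fun G _ => hgood G)
  have hPo0 : Po ≠ 0 := hgoodPo.ne_zero
  rw [← Finset.prod_filter_mul_prod_filter_not K.powerset (fun G => Even (K.card - G.card))]
  have he1 : ∏ G ∈ K.powerset.filter (fun G => Even (K.card - G.card)),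
      (C + RatFunc.X * ∑ i ∈ G, c' i) ^ ((-1:ℤ) ^ (K.card - G.card)) = Pe := by
    rw [hPe]
    apply Finset.prod_congr rfl
    intro G hG
    rw [(Finset.mem_filter.mp hG).2.neg_one_pow, zpow_one]
  have he2 : ∏ G ∈ K.powerset.filter (fun G => ¬ Even (K.card - G.card)),
      (C + RatFunc.X * ∑ i ∈ G, c' i) ^ ((-1:ℤ) ^ (K.card - G.card)) = Po⁻¹ := by
    rw [hPo, ← Finset.prod_inv_distrib]
    apply Finset.prod_congr rfl
    intro G hG
    rw [(Nat.not_even_iff_odd.mp (Finset.mem_filter.mp hG).2).neg_one_pow, zpow_neg_one]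
  rw [he1, he2]
  refine ⟨(g : RatFunc F) * Po⁻¹, Stmt7Aux.np_mul g.2 hgoodPo.inv.np, ?_⟩
  rw [show Pe * Po⁻¹ - 1 = (Pe - Po) * Po⁻¹ by rw [sub_mul, mul_inv_cancel₀ hPo0],
    heq, mul_assoc]
end

section
/- Let (u_I)_{I⊆[r]} be a family of nonzero elements of R(α) with u_∅ = 1, all regular and with regular inverse at α = 0. If for every subset H ⊆ [r] with |H| ≥ 2 the quantity T_H(u) := ∏_{G⊆H} u_G^{(-1)^{|H|-|G|}} − 1 is O(α^{|H|-1}), then for every such H the cumulant κ_H(u) := ∑_{π∈P(H)} μ(π,{H}) ∏_{B∈π} u_B satisfies κ_H(u) = (∏_{h∈H} u_{h}) · O(α^{|H|-1}). -/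
open scoped BigOperators

/-- `T_H(u) = ∏_{G⊆H} u_G^{(-1)^{|H|-|G|}} − 1`. -/
noncomputable def Terr {F ι : Type*} [Field F] [DecidableEq ι]
    (u : Finset ι → RatFunc F) (H : Finset ι) : RatFunc F :=
  (∏ G ∈ H.powerset, u G ^ ((-1 : ℤ) ^ (H.card - G.card))) - 1

/-- `κ_H(u) = ∑_{π ∈ P(H)} μ(π,{H}) ∏_{B∈π} u_B` with
`μ(π,{H}) = (-1)^{#(π)-1}(#(π)-1)!`. -/
noncomputable def cum {F ι : Type*} [Field F] [DecidableEq ι]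
    (u : Finset ι → RatFunc F) (H : Finset ι) : RatFunc F :=
  ∑ᶠ π : Finpartition H,
    (((-1 : ℤ) ^ (π.parts.card - 1) * (π.parts.card - 1).factorial : ℤ)) •
      ∏ B ∈ π.parts, u B

namespace Stmt9

open Finset


variable {F : Type*} [Field F]

lemma np_of_dvd {f : RatFunc F} {p : Polynomial F} (h : f.denom ∣ p)
    (hp : Polynomial.eval 0 p ≠ 0) : NoPoleAtZero f := by
  obtain ⟨c, rfl⟩ := h
  intro h0
  apply hp
  rw [Polynomial.eval_mul, h0, zero_mul]

lemma np_algebraMap (p : Polynomial F) :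
    NoPoleAtZero (algebraMap (Polynomial F) (RatFunc F) p) := by
  unfold NoPoleAtZero
  rw [RatFunc.denom_algebraMap]
  simp

lemma np_one : NoPoleAtZero (1 : RatFunc F) := by
  simpa using np_algebraMap (F := F) 1

lemma np_X : NoPoleAtZero (RatFunc.X : RatFunc F) := by
  simpa using np_algebraMap (F := F) Polynomial.X

lemma np_mul {f g : RatFunc F} (hf : NoPoleAtZero f) (hg : NoPoleAtZero g) :
    NoPoleAtZero (f * g) := by
  refine np_of_dvd (RatFunc.denom_mul_dvd f g) ?_
  rw [Polynomial.eval_mul]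
  exact mul_ne_zero hf hg

lemma np_add {f g : RatFunc F} (hf : NoPoleAtZero f) (hg : NoPoleAtZero g) :
    NoPoleAtZero (f + g) := by
  refine np_of_dvd (RatFunc.denom_add_dvd f g) ?_
  rw [Polynomial.eval_mul]
  exact mul_ne_zero hf hg

lemma np_intCast (z : ℤ) : NoPoleAtZero ((z : ℤ) • (1 : RatFunc F)) := by
  rw [zsmul_eq_mul, mul_one]
  have : ((z : ℤ) : RatFunc F) = algebraMap (Polynomial F) (RatFunc F) ((z : ℤ) : Polynomial F) := by
    simp
  rw [this]
  exact np_algebraMap _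

lemma np_zsmul (z : ℤ) {f : RatFunc F} (hf : NoPoleAtZero f) : NoPoleAtZero (z • f) := by
  have : z • f = ((z : ℤ) • (1 : RatFunc F)) * f := by
    rw [zsmul_eq_mul, zsmul_eq_mul, mul_one]
  rw [this]
  exact np_mul (np_intCast z) hf

lemma np_prod {γ : Type*} {s : Finset γ} {f : γ → RatFunc F}
    (h : ∀ i ∈ s, NoPoleAtZero (f i)) : NoPoleAtZero (∏ i ∈ s, f i) :=
  Finset.prod_induction f NoPoleAtZero (fun _ _ => np_mul) np_one h

lemma np_sum {γ : Type*} {s : Finset γ} {f : γ → RatFunc F}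
    (h : ∀ i ∈ s, NoPoleAtZero (f i)) : NoPoleAtZero (∑ i ∈ s, f i) := by
  classical
  induction s using Finset.induction with
  | empty => simpa using np_intCast (F := F) 0
  | insert _ _ hx ih =>
    rw [Finset.sum_insert hx]
    exact np_add (h _ (Finset.mem_insert_self _ _))
      (ih fun i hi => h i (Finset.mem_insert_of_mem hi))

lemma np_pow {f : RatFunc F} (hf : NoPoleAtZero f) (n : ℕ) : NoPoleAtZero (f ^ n) := by
  induction n with
  | zero => simpa using np_one (F := F)
  | succ n ih => rw [pow_succ]; exact np_mul ih hf



variable {F ι : Type*} [Field F] [DecidableEq ι]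

lemma zpow_prod_sum {γ : Type*} (a : RatFunc F) (ha : a ≠ 0) (s : Finset γ) (f : γ → ℤ) :
    ∏ i ∈ s, a ^ (f i) = a ^ (∑ i ∈ s, f i) := by
  classical
  induction s using Finset.induction with
  | empty => simp
  | insert _ _ hx ih =>
    rw [Finset.prod_insert hx, Finset.sum_insert hx, ih, ← zpow_add₀ ha]

lemma esum {G B : Finset ι} (hG : G ⊆ B) :
    ∑ W ∈ B.powerset.filter (fun W => G ⊆ W), (-1 : ℤ) ^ (W.card - G.card)
      = if G = B then 1 else 0 := by
  have key : ∑ W ∈ B.powerset.filter (fun W => G ⊆ W), (-1 : ℤ) ^ (W.card - G.card)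
      = ∑ V ∈ (B \ G).powerset, (-1 : ℤ) ^ V.card := by
    refine Finset.sum_nbij' (fun W => W \ G) (fun V => V ∪ G) ?_ ?_ ?_ ?_ ?_
    · intro W hW
      rw [Finset.mem_filter, Finset.mem_powerset] at hW
      exact Finset.mem_powerset.2 (Finset.sdiff_subset_sdiff hW.1 le_rfl)
    · intro V hV
      rw [Finset.mem_powerset] at hV
      rw [Finset.mem_filter, Finset.mem_powerset]
      exact ⟨Finset.union_subset (hV.trans (Finset.sdiff_subset)) hG,
        Finset.subset_union_right⟩
    · intro W hW
      rw [Finset.mem_filter] at hW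
      exact Finset.sdiff_union_of_subset hW.2
    · intro V hV
      rw [Finset.mem_powerset] at hV
      have hdisj : Disjoint V G := Finset.disjoint_left.2 fun a haV haG =>
        (Finset.mem_sdiff.1 (hV haV)).2 haG
      show (V ∪ G) \ G = V
      rw [Finset.union_sdiff_cancel_right hdisj]
    · intro W hW
      rw [Finset.mem_filter] at hW
      rw [Finset.card_sdiff_of_subset hW.2]
  rw [key, Finset.sum_powerset_neg_one_pow_card]
  have hiff : (B \ G = ∅) ↔ (G = B) := by
    rw [Finset.sdiff_eq_empty_iff_subset]
    exact ⟨fun h => Finset.Subset.antisymm hG h, fun h => h ▸ Finset.Subset.refl _⟩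
  simp only [hiff]

variable (u : Finset ι → RatFunc F) (h0 : u ∅ = 1) (hne : ∀ I, u I ≠ 0)

lemma one_add_terr (W : Finset ι) :
    1 + Terr u W = ∏ G ∈ W.powerset, u G ^ ((-1 : ℤ) ^ (W.card - G.card)) := by
  unfold Terr; ring

include hne in
lemma prod_powerset_one_add_terr (B : Finset ι) :
    ∏ W ∈ B.powerset, (1 + Terr u W) = u B := by
  calc ∏ W ∈ B.powerset, (1 + Terr u W)
      = ∏ W ∈ B.powerset, ∏ G ∈ W.powerset, u G ^ ((-1 : ℤ) ^ (W.card - G.card)) :=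
        Finset.prod_congr rfl fun W _ => one_add_terr u W
    _ = ∏ G ∈ B.powerset, ∏ W ∈ B.powerset.filter (fun W => G ⊆ W),
          u G ^ ((-1 : ℤ) ^ (W.card - G.card)) := by
        refine Finset.prod_comm' ?_
        intro W G
        simp only [Finset.mem_powerset, Finset.mem_filter]
        constructor
        · rintro ⟨h1, h2⟩; exact ⟨⟨h1, h2⟩, h2.trans h1⟩
        · rintro ⟨⟨h1, h2⟩, _⟩; exact ⟨h1, h2⟩
    _ = ∏ G ∈ B.powerset, u G ^ (∑ W ∈ B.powerset.filter (fun W => G ⊆ W),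
          (-1 : ℤ) ^ (W.card - G.card)) :=
        Finset.prod_congr rfl fun G _ => zpow_prod_sum (u G) (hne G) _ _
    _ = ∏ G ∈ B.powerset, (if G = B then u G else 1) := by
        refine Finset.prod_congr rfl fun G hG => ?_
        rw [esum (Finset.mem_powerset.1 hG)]
        split_ifs <;> simp
    _ = u B := by
        rw [Finset.prod_ite_eq' B.powerset B u]
        simp

include h0 in
lemma terr_empty : Terr u ∅ = 0 := by
  unfold Terr
  rw [Finset.powerset_empty, Finset.prod_singleton]
  simp [h0]

include h0 in
lemma one_add_terr_singleton (h : ι) : 1 + Terr u {h} = u {h} := by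
  rw [one_add_terr]
  have hps : ({h} : Finset ι).powerset = {∅, {h}} := by
    ext W
    simp [Finset.subset_singleton_iff]
  rw [hps]
  rw [Finset.prod_insert (by simp [Ne]), Finset.prod_singleton]
  simp [h0]

include h0 hne in
lemma factorization (B : Finset ι) :
    u B = (∏ h ∈ B, u {h}) * ∏ W ∈ B.powerset.filter (fun W => 2 ≤ W.card), (1 + Terr u W) := by
  conv_lhs => rw [← prod_powerset_one_add_terr u hne B]
  rw [← Finset.prod_filter_mul_prod_filter_not B.powerset (fun W => 2 ≤ W.card)]
  rw [mul_comm]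
  congr 1
  have hset : B.powerset.filter (fun W => ¬ 2 ≤ W.card)
      = insert ∅ (B.image fun h => ({h} : Finset ι)) := by
    ext W
    simp only [Finset.mem_filter, Finset.mem_powerset, Finset.mem_insert, Finset.mem_image,
      not_le]
    constructor
    · rintro ⟨hWB, hcard⟩
      interval_cases h : W.card
      · left; exact Finset.card_eq_zero.1 h
      · right
        obtain ⟨a, rfl⟩ := Finset.card_eq_one.1 h
        exact ⟨a, hWB (Finset.mem_singleton_self a), rfl⟩
    · rintro (rfl | ⟨a, haB, rfl⟩)
      · simp
      · exact ⟨Finset.singleton_subset_iff.2 haB, by simp⟩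
  rw [hset, Finset.prod_insert (by simp), terr_empty u h0]
  rw [Finset.prod_image (fun x _ y _ hxy => Finset.singleton_injective hxy)]
  simp only [one_add_terr_singleton u h0]
  simp



variable {ι : Type*} [Fintype ι] [DecidableEq ι]

/-! ### Closure machinery -/

def closedUnder (S : Finset (Finset ι)) (A : Finset ι) : Prop :=
  ∀ W ∈ S, (W ∩ A).Nonempty → W ⊆ A

instance (S : Finset (Finset ι)) : DecidablePred (closedUnder S) := fun A =>
  decidable_of_iff (∀ W ∈ S, (W ∩ A).Nonempty → W ⊆ A) Iff.rfl

def cl (S : Finset (Finset ι)) (A : Finset ι) : Finset ι :=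
  Finset.inf ((Finset.univ : Finset (Finset ι)).filter fun C => A ⊆ C ∧ closedUnder S C) id

lemma subset_cl (S : Finset (Finset ι)) (A : Finset ι) : A ⊆ cl S A := by
  unfold cl
  show A ≤ _
  refine Finset.le_inf fun C hC => ?_
  exact (Finset.mem_filter.1 hC).2.1

lemma cl_subset {S : Finset (Finset ι)} {A C : Finset ι} (h1 : A ⊆ C)
    (h2 : closedUnder S C) : cl S A ⊆ C := by
  unfold cl
  show Finset.inf _ id ≤ C
  exact Finset.inf_le (Finset.mem_filter.2 ⟨Finset.mem_univ _, h1, h2⟩)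

lemma closedUnder_cl (S : Finset (Finset ι)) (A : Finset ι) : closedUnder S (cl S A) := by
  intro W hW hne
  show W ⊆ cl S A
  unfold cl
  show W ≤ _
  refine Finset.le_inf fun C hC => ?_
  rw [Finset.mem_filter] at hC
  have hsub : cl S A ⊆ C := cl_subset hC.2.1 hC.2.2
  obtain ⟨x, hx⟩ := hne
  rw [Finset.mem_inter] at hx
  exact hC.2.2 W hW ⟨x, Finset.mem_inter.2 ⟨hx.1, hsub hx.2⟩⟩

lemma cl_card (S : Finset (Finset ι)) : ∀ A : Finset ι,
    (cl S A).card ≤ A.card + ∑ W ∈ S, (W.card - 1) := by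
  induction S using Finset.strongInduction with
  | _ S ih =>
    intro A
    by_cases h : ∃ W ∈ S, (W ∩ A).Nonempty ∧ ¬ W ⊆ A
    · obtain ⟨W, hWS, ⟨x, hx⟩, _⟩ := h
      rw [Finset.mem_inter] at hx
      have h1 : cl S A ⊆ cl (S.erase W) (A ∪ W) := by
        refine cl_subset (Finset.subset_union_left.trans (subset_cl _ _)) ?_
        intro W' hW' hne
        by_cases hWW : W' = W
        · subst hWW
          exact Finset.subset_union_right.trans (subset_cl _ _)
        · exact closedUnder_cl _ _ W' (Finset.mem_erase.2 ⟨hWW, hW'⟩) hne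
      have h2 := ih (S.erase W) (Finset.erase_ssubset hWS) (A ∪ W)
      have h3 : (A ∪ W).card ≤ A.card + (W.card - 1) := by
        have e1 : A ∪ W = A ∪ (W \ A) := by rw [Finset.union_sdiff_self_eq_union]
        have e2 : Disjoint A (W \ A) := Finset.disjoint_sdiff
        have e3 : W \ A ⊆ W.erase x := by
          intro y hy
          rw [Finset.mem_sdiff] at hy
          exact Finset.mem_erase.2 ⟨fun hyx => hy.2 (hyx ▸ hx.2), hy.1⟩
        have e4 : (W \ A).card ≤ W.card - 1 := by
          calc (W \ A).card ≤ (W.erase x).card := Finset.card_le_card e3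
            _ = W.card - 1 := Finset.card_erase_of_mem hx.1
        rw [e1, Finset.card_union_of_disjoint e2]
        omega
      have h4 : (W.card - 1) + ∑ W' ∈ S.erase W, (W'.card - 1) = ∑ W' ∈ S, (W'.card - 1) :=
        Finset.add_sum_erase S (fun W => W.card - 1) hWS
      have := Finset.card_le_card h1
      omega
    · push_neg at h
      have : cl S A ⊆ A := cl_subset (Finset.Subset.refl A) h
      exact le_trans (Finset.card_le_card this) (Nat.le_add_right _ _)

/-! ### mu and compat -/

def mu (k : ℕ) : ℤ := (-1) ^ (k - 1) * (k - 1).factorial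

lemma muRec {k : ℕ} (hk : 1 ≤ k) : mu (k + 1) + k * mu k = 0 := by
  obtain ⟨m, rfl⟩ : ∃ m, k = m + 1 := ⟨k - 1, by omega⟩
  show (-1 : ℤ) ^ (m + 1 + 1 - 1) * (m + 1 + 1 - 1).factorial
      + (m + 1 : ℕ) * ((-1) ^ (m + 1 - 1) * (m + 1 - 1).factorial) = 0
  simp only [Nat.add_sub_cancel, Nat.factorial_succ, pow_succ]
  push_cast
  ring

def compat {s : Finset ι} (S : Finset (Finset ι)) (π : Finpartition s) : Prop :=
  ∀ W ∈ S, ∃ B ∈ π.parts, W ⊆ B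

instance {s : Finset ι} (S : Finset (Finset ι)) :
    DecidablePred (compat (s := s) S) := fun π =>
  decidable_of_iff (∀ W ∈ S, ∃ B ∈ π.parts, W ⊆ B) Iff.rfl

/-! ### Partition surgery -/

lemma aux_supIndep {s : Finset ι} (π : Finpartition s) {B0 : Finset ι}
    (hB0 : B0 ∈ π.parts) (P0 : Finset ι) :
    (insert (B0 \ P0) (π.parts.erase B0)).SupIndep id := by
  rw [Finset.supIndep_iff_pairwiseDisjoint]
  intro a ha b hb hab
  rw [Finset.mem_coe, Finset.mem_insert] at ha hb
  rcases ha with rfl | ha <;> rcases hb with rfl | hb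
  · exact absurd rfl hab
  · rw [Finset.mem_erase] at hb
    exact Disjoint.mono_left Finset.sdiff_subset (π.disjoint hB0 hb.2 (Ne.symm hb.1))
  · rw [Finset.mem_erase] at ha
    exact Disjoint.mono_right Finset.sdiff_subset (π.disjoint ha.2 hB0 ha.1)
  · rw [Finset.mem_erase] at ha hb
    exact π.disjoint ha.2 hb.2 hab

lemma aux_sup {s : Finset ι} (π : Finpartition s) {B0 : Finset ι} (hB0 : B0 ∈ π.parts) :
    (π.parts.erase B0).sup id = s \ B0 := by
  have hdis : Disjoint (id B0) ((π.parts.erase B0).sup id) :=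
    Finset.supIndep_iff_disjoint_erase.1 π.supIndep B0 hB0
  have hsup : B0 ∪ (π.parts.erase B0).sup id = s := by
    have : (insert B0 (π.parts.erase B0)).sup id = s := by
      rw [Finset.insert_erase hB0]; exact π.sup_parts
    rw [Finset.sup_insert] at this
    rw [← Finset.sup_eq_union]
    exact this
  ext y
  simp only [Finset.mem_sdiff, ← hsup, Finset.mem_union]
  constructor
  · intro hy
    exact ⟨Or.inr hy, fun hB => Finset.disjoint_left.1 hdis hB hy⟩
  · rintro ⟨h1, h2⟩
    exact h1.resolve_left h2

def resP {s : Finset ι} (π : Finpartition s) (P0 : Finset ι) (x0 : ι) (hx0 : x0 ∈ s)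
    (hsub : P0 ⊆ π.part x0) : Finpartition (s \ P0) :=
  Finpartition.ofErase (insert (π.part x0 \ P0) (π.parts.erase (π.part x0)))
    (aux_supIndep π (π.part_mem.2 hx0) P0)
    (by
      rw [Finset.sup_insert, aux_sup π (π.part_mem.2 hx0)]
      show (π.part x0 \ P0) ⊔ (s \ π.part x0) = s \ P0
      rw [sup_eq_union]
      have hBs : π.part x0 ⊆ s := π.le (π.part_mem.2 hx0)
      ext y
      simp only [Finset.mem_union, Finset.mem_sdiff]
      constructor
      · rintro (⟨h1, h2⟩ | ⟨h1, h2⟩)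
        · exact ⟨hBs h1, h2⟩
        · exact ⟨h1, fun hy => h2 (hsub hy)⟩
      · rintro ⟨h1, h2⟩
        by_cases hy : y ∈ π.part x0
        · exact Or.inl ⟨hy, h2⟩
        · exact Or.inr ⟨h1, hy⟩)

lemma resP_parts {s : Finset ι} (π : Finpartition s) (P0 : Finset ι) (x0 : ι) (hx0 : x0 ∈ s)
    (hsub : P0 ⊆ π.part x0) :
    (resP π P0 x0 hx0 hsub).parts
      = (insert (π.part x0 \ P0) (π.parts.erase (π.part x0))).erase ∅ := rfl

def glueP {s P0 : Finset ι} (hP0s : P0 ⊆ s) (hP0ne : P0.Nonempty)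
    (π' : Finpartition (s \ P0)) (B : Finset ι) (hB : B ∈ insert ∅ π'.parts) :
    Finpartition s where
  parts := insert (B ∪ P0) (π'.parts.erase B)
  supIndep := by
    rw [Finset.supIndep_iff_pairwiseDisjoint]
    intro a ha b hb hab
    rw [Finset.mem_coe, Finset.mem_insert] at ha hb
    have key : ∀ c ∈ π'.parts.erase B, Disjoint c (B ∪ P0) := by
      intro c hc
      rw [Finset.mem_erase] at hc
      rw [Finset.disjoint_union_right]
      constructor
      · rcases Finset.mem_insert.1 hB with rfl | hBp
        · exact Finset.disjoint_empty_right _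
        · exact π'.disjoint hc.2 hBp hc.1
      · have hcs : c ⊆ s \ P0 := π'.le hc.2
        exact Finset.disjoint_left.2 fun x hxc hxP => (Finset.mem_sdiff.1 (hcs hxc)).2 hxP
    rcases ha with rfl | ha <;> rcases hb with rfl | hb
    · exact absurd rfl hab
    · exact (key b hb).symm
    · exact key a ha
    · rw [Finset.mem_erase] at ha hb
      exact π'.disjoint ha.2 hb.2 hab
  sup_parts := by
    rw [Finset.sup_insert]
    show (B ∪ P0) ⊔ (π'.parts.erase B).sup id = s
    rcases Finset.mem_insert.1 hB with rfl | hBp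
    · rw [Finset.erase_eq_of_notMem (show (∅ : Finset ι) ∉ π'.parts from π'.bot_notMem),
        sup_eq_union, Finset.empty_union]
      rw [π'.sup_parts]
      exact Finset.union_sdiff_of_subset hP0s
    · rw [aux_sup π' hBp, sup_eq_union]
      have hBs : B ⊆ s \ P0 := π'.le hBp
      ext y
      simp only [Finset.mem_union, Finset.mem_sdiff]
      constructor
      · rintro ((hy | hy) | ⟨⟨h1, h2⟩, h3⟩)
        · exact (Finset.mem_sdiff.1 (hBs hy)).1
        · exact hP0s hy
        · exact h1
      · intro hy
        by_cases h1 : y ∈ P0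
        · exact Or.inl (Or.inr h1)
        · by_cases h2 : y ∈ B
          · exact Or.inl (Or.inl h2)
          · exact Or.inr ⟨⟨hy, h1⟩, h2⟩
  bot_notMem := by
    rw [Finset.mem_insert]
    rintro (h | h)
    · have := Finset.union_eq_empty.1 h.symm
      exact hP0ne.ne_empty this.2
    · exact π'.bot_notMem (Finset.mem_of_mem_erase h)

lemma glueP_parts {s P0 : Finset ι} (hP0s : P0 ⊆ s) (hP0ne : P0.Nonempty)
    (π' : Finpartition (s \ P0)) (B : Finset ι) (hB : B ∈ insert ∅ π'.parts) :
    (glueP hP0s hP0ne π' B hB).parts = insert (B ∪ P0) (π'.parts.erase B) := rfl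


section Surgery

variable {s P0 : Finset ι} {x0 : ι}

lemma left_inv_parts (hP0s : P0 ⊆ s) (hP0ne : P0.Nonempty) (hx0s : x0 ∈ s)
    (π : Finpartition s) (hsub : P0 ⊆ π.part x0)
    (hmem : π.part x0 \ P0 ∈ insert ∅ (resP π P0 x0 hx0s hsub).parts) :
    glueP hP0s hP0ne (resP π P0 x0 hx0s hsub) (π.part x0 \ P0) hmem = π := by
  set B0 := π.part x0 with hB0def
  have hB0 : B0 ∈ π.parts := π.part_mem.2 hx0s
  have hXE : B0 \ P0 ∉ π.parts.erase B0 := by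
    intro h
    rw [Finset.mem_erase] at h
    have hd : Disjoint (B0 \ P0) B0 := π.disjoint h.2 hB0 h.1
    have : B0 \ P0 = ∅ := Disjoint.eq_bot_of_le hd Finset.sdiff_subset
    rw [this] at h
    exact π.bot_notMem h.2
  have hEne : (∅ : Finset ι) ∉ π.parts.erase B0 := fun h =>
    π.bot_notMem (Finset.mem_of_mem_erase h)
  apply Finpartition.ext
  rw [glueP_parts, resP_parts]
  rw [Finset.sdiff_union_of_subset hsub]
  rw [Finset.erase_right_comm, Finset.erase_insert_eq_erase,
    Finset.erase_eq_of_notMem hXE, Finset.erase_eq_of_notMem hEne,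
    Finset.insert_erase hB0]

lemma glue_part_x0 (hP0s : P0 ⊆ s) (hP0ne : P0.Nonempty) (hx0P : x0 ∈ P0)
    (π' : Finpartition (s \ P0)) (B : Finset ι) (hB : B ∈ insert ∅ π'.parts) :
    (glueP hP0s hP0ne π' B hB).part x0 = B ∪ P0 :=
  Finpartition.part_eq_of_mem _ (Finset.mem_insert_self _ _)
    (Finset.mem_union_right _ hx0P)

lemma right_inv_parts (hP0s : P0 ⊆ s) (hP0ne : P0.Nonempty) (hx0s : x0 ∈ s) (hx0P : x0 ∈ P0)
    (π' : Finpartition (s \ P0)) (B : Finset ι) (hB : B ∈ insert ∅ π'.parts)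
    (hsub : P0 ⊆ (glueP hP0s hP0ne π' B hB).part x0) :
    resP (glueP hP0s hP0ne π' B hB) P0 x0 hx0s hsub = π'
      ∧ (glueP hP0s hP0ne π' B hB).part x0 \ P0 = B := by
  have hpart : (glueP hP0s hP0ne π' B hB).part x0 = B ∪ P0 :=
    glue_part_x0 hP0s hP0ne hx0P π' B hB
  have hBdisj : Disjoint B P0 := by
    rcases Finset.mem_insert.1 hB with rfl | hBp
    · exact Finset.disjoint_empty_left _
    · have := π'.le hBp
      exact Finset.disjoint_left.2 fun x hx hxP => (Finset.mem_sdiff.1 (this hx)).2 hxP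
  have hsnd : (glueP hP0s hP0ne π' B hB).part x0 \ P0 = B := by
    rw [hpart, Finset.union_sdiff_cancel_right hBdisj]
  refine ⟨?_, hsnd⟩
  apply Finpartition.ext
  rw [resP_parts, hsnd, hpart, glueP_parts]
  have hnotmem : B ∪ P0 ∉ π'.parts.erase B := by
    intro h
    have hle := π'.le (Finset.mem_of_mem_erase h)
    obtain ⟨y, hy⟩ := hP0ne
    have : y ∈ s \ P0 := hle (Finset.mem_union_right _ hy)
    exact (Finset.mem_sdiff.1 this).2 hy
  rw [Finset.erase_insert_eq_erase, Finset.erase_eq_of_notMem hnotmem]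
  have hEne : (∅ : Finset ι) ∉ π'.parts := π'.bot_notMem
  rcases Finset.mem_insert.1 hB with rfl | hBp
  · rw [Finset.erase_insert_eq_erase, Finset.erase_eq_of_notMem hEne,
      Finset.erase_eq_of_notMem hEne]
  · rw [Finset.insert_erase hBp, Finset.erase_eq_of_notMem hEne]

lemma resP_card (hx0s : x0 ∈ s) (π : Finpartition s) (hsub : P0 ⊆ π.part x0) :
    (resP π P0 x0 hx0s hsub).parts.card
      = if π.part x0 \ P0 = ∅ then π.parts.card - 1 else π.parts.card := by
  have hB0 : π.part x0 ∈ π.parts := π.part_mem.2 hx0s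
  have hXE : π.part x0 \ P0 ∉ π.parts.erase (π.part x0) := by
    intro h
    rw [Finset.mem_erase] at h
    have hd : Disjoint (π.part x0 \ P0) (π.part x0) := π.disjoint h.2 hB0 h.1
    have : π.part x0 \ P0 = ∅ := Disjoint.eq_bot_of_le hd Finset.sdiff_subset
    rw [this] at h
    exact π.bot_notMem h.2
  have hEne : (∅ : Finset ι) ∉ π.parts.erase (π.part x0) := fun h =>
    π.bot_notMem (Finset.mem_of_mem_erase h)
  rw [resP_parts]
  split_ifs with hX
  · rw [hX, Finset.erase_insert_eq_erase, Finset.erase_eq_of_notMem hEne,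
      Finset.card_erase_of_mem hB0]
  · have : (∅ : Finset ι) ∉ insert (π.part x0 \ P0) (π.parts.erase (π.part x0)) := by
      rw [Finset.mem_insert]
      rintro (h | h)
      · exact hX h.symm
      · exact hEne h
    rw [Finset.erase_eq_of_notMem this, Finset.card_insert_of_notMem hXE,
      Finset.card_erase_of_mem hB0]
    have : 1 ≤ π.parts.card := Finset.card_pos.2 ⟨_, hB0⟩
    omega

end Surgery

/-! ### The core combinatorial vanishing -/

theorem core {s : Finset ι} {S : Finset (Finset ι)} (hWs : ∀ W ∈ S, W ⊆ s ∧ 2 ≤ W.card)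
    (hcard : (∑ W ∈ S, (W.card - 1)) + 1 < s.card) :
    ∑ π ∈ Finset.univ.filter (fun π : Finpartition s => compat S π),
      mu π.parts.card = 0 := by
  have hs : s.Nonempty := Finset.card_pos.1 (by omega)
  obtain ⟨x0, hx0s⟩ := hs
  set P0 := cl S {x0} with hP0def
  have hx0P : x0 ∈ P0 := subset_cl _ _ (Finset.mem_singleton_self x0)
  have hP0ne : P0.Nonempty := ⟨x0, hx0P⟩
  have hclosed : closedUnder S P0 := closedUnder_cl S {x0}
  have hP0s : P0 ⊆ s :=
    cl_subset (Finset.singleton_subset_iff.2 hx0s) (fun W hW _ => (hWs W hW).1)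
  have hP0card : P0.card ≤ 1 + ∑ W ∈ S, (W.card - 1) := by
    have := cl_card S {x0}
    simpa using this
  have hs'card : (s \ P0).card = s.card - P0.card := Finset.card_sdiff_of_subset hP0s
  have hs'ne : (s \ P0).Nonempty := Finset.card_pos.1 (by omega)
  have hdich : ∀ W ∈ S, W ⊆ P0 ∨ (Disjoint W P0 ∧ W ⊆ s \ P0) := by
    intro W hW
    by_cases hint : (W ∩ P0).Nonempty
    · exact Or.inl (hclosed W hW hint)
    · right
      have hd : Disjoint W P0 := by
        rw [Finset.disjoint_iff_inter_eq_empty]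
        exact Finset.not_nonempty_iff_eq_empty.1 hint
      exact ⟨hd, fun y hy => Finset.mem_sdiff.2
        ⟨(hWs W hW).1 hy, fun hyP => Finset.disjoint_left.1 hd hy hyP⟩⟩
  have hWne : ∀ W ∈ S, W.Nonempty := fun W hW =>
    Finset.card_pos.1 (by have := (hWs W hW).2; omega)
  have hkey : ∀ π : Finpartition s, compat S π → P0 ⊆ π.part x0 := by
    intro π hπ
    refine cl_subset (Finset.singleton_subset_iff.2 (π.mem_part hx0s)) ?_
    rintro W hW ⟨y, hy⟩
    rw [Finset.mem_inter] at hy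
    obtain ⟨B, hB, hWB⟩ := hπ W hW
    have hBeq : B = π.part x0 := π.eq_of_mem_parts hB (π.part_mem.2 hx0s) (hWB hy.1) hy.2
    exact hBeq ▸ hWB
  set S' := S.filter (fun W => ¬ W ⊆ P0) with hS'def
  set T := (Finset.univ ×ˢ Finset.univ :
      Finset (Finpartition (s \ P0) × Finset ι)).filter
      (fun p => compat S' p.1 ∧ p.2 ∈ insert ∅ p.1.parts) with hTdef
  have hWS' : ∀ W ∈ S', W ⊆ s \ P0 ∧ Disjoint W P0 := by
    intro W hW
    rw [hS'def, Finset.mem_filter] at hW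
    rcases hdich W hW.1 with h | h
    · exact absurd h hW.2
    · exact ⟨h.2, h.1⟩
  have hbij : ∑ π ∈ Finset.univ.filter (fun π : Finpartition s => compat S π),
      mu π.parts.card
      = ∑ p ∈ T, (if p.2 = ∅ then mu (p.1.parts.card + 1) else mu p.1.parts.card) := by
    refine Finset.sum_bij'
      (fun π hπ => (resP π P0 x0 hx0s (hkey π (Finset.mem_filter.1 hπ).2),
        π.part x0 \ P0))
      (fun p hp => glueP hP0s hP0ne p.1 p.2 (Finset.mem_filter.1 hp).2.2)
      ?_ ?_ ?_ ?_ ?_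
    · -- hi : image in T
      intro π hπ
      have hπc : compat S π := (Finset.mem_filter.1 hπ).2
      have hsub : P0 ⊆ π.part x0 := hkey π hπc
      rw [hTdef, Finset.mem_filter]
      refine ⟨Finset.mem_product.2 ⟨Finset.mem_univ _, Finset.mem_univ _⟩, ?_, ?_⟩
      · -- compat S' (resP ...)
        intro W hW
        have hWS := (Finset.mem_filter.1 hW).1
        obtain ⟨hWsub, hWd⟩ := hWS' W hW
        obtain ⟨B, hB, hWB⟩ := hπc W hWS
        by_cases hBB : B = π.part x0
        · refine ⟨π.part x0 \ P0, ?_, ?_⟩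
          · rw [resP_parts]
            refine Finset.mem_erase.2 ⟨?_, Finset.mem_insert_self _ _⟩
            obtain ⟨y, hy⟩ := hWne W hWS
            intro hemp
            have : y ∈ π.part x0 \ P0 := Finset.mem_sdiff.2
              ⟨hBB ▸ hWB hy, fun hyP => Finset.disjoint_left.1 hWd hy hyP⟩
            rw [hemp] at this
            exact absurd this (Finset.notMem_empty y)
          · intro y hy
            exact Finset.mem_sdiff.2 ⟨hBB ▸ hWB hy,
              fun hyP => Finset.disjoint_left.1 hWd hy hyP⟩
        · refine ⟨B, ?_, hWB⟩
          rw [resP_parts]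
          exact Finset.mem_erase.2 ⟨π.ne_bot hB,
            Finset.mem_insert_of_mem (Finset.mem_erase.2 ⟨hBB, hB⟩)⟩
      · -- snd mem
        show π.part x0 \ P0 ∈ insert ∅ (resP π P0 x0 hx0s hsub).parts
        by_cases hX : π.part x0 \ P0 = ∅
        · rw [hX]; exact Finset.mem_insert_self _ _
        · refine Finset.mem_insert_of_mem ?_
          rw [resP_parts]
          exact Finset.mem_erase.2 ⟨hX, Finset.mem_insert_self _ _⟩
    · -- hj : image in A
      intro p hp
      rw [Finset.mem_filter]
      refine ⟨Finset.mem_univ _, ?_⟩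
      intro W hW
      rcases hdich W hW with hsub | ⟨hd, hsubs'⟩
      · exact ⟨p.2 ∪ P0, Finset.mem_insert_self _ _,
          hsub.trans Finset.subset_union_right⟩
      · have hWS'mem : W ∈ S' := by
          rw [hS'def, Finset.mem_filter]
          refine ⟨hW, fun hsubP => ?_⟩
          obtain ⟨y, hy⟩ := hWne W hW
          exact Finset.disjoint_left.1 hd hy (hsubP hy)
        obtain ⟨C, hC, hWC⟩ := (Finset.mem_filter.1 hp).2.1 W hWS'mem
        by_cases hCB : C = p.2
        · exact ⟨p.2 ∪ P0, Finset.mem_insert_self _ _,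
            (hCB ▸ hWC).trans Finset.subset_union_left⟩
        · exact ⟨C, Finset.mem_insert_of_mem (Finset.mem_erase.2 ⟨hCB, hC⟩), hWC⟩
    · -- left_inv
      intro π hπ
      exact left_inv_parts hP0s hP0ne hx0s π
        (hkey π (Finset.mem_filter.1 hπ).2) _
    · -- right_inv
      intro p hp
      obtain ⟨h1, h2⟩ := right_inv_parts hP0s hP0ne hx0s hx0P p.1 p.2
        (Finset.mem_filter.1 hp).2.2
        (by rw [glue_part_x0 hP0s hP0ne hx0P]; exact Finset.subset_union_right)
      exact Prod.ext h1 h2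
    · -- weights
      intro π hπ
      have hsub : P0 ⊆ π.part x0 := hkey π (Finset.mem_filter.1 hπ).2
      have hcard' := resP_card (P0 := P0) hx0s π hsub
      have hpos : 1 ≤ π.parts.card :=
        Finset.card_pos.2 ⟨_, π.part_mem.2 hx0s⟩
      show mu π.parts.card = if π.part x0 \ P0 = ∅
        then mu ((resP π P0 x0 hx0s hsub).parts.card + 1)
        else mu ((resP π P0 x0 hx0s hsub).parts.card)
      by_cases hX : π.part x0 \ P0 = ∅
      · rw [if_pos hX, hcard', if_pos hX]
        congr 1
        omega
      · rw [if_neg hX, hcard', if_neg hX]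
  rw [hbij]
  have hprod : ∑ p ∈ T, (if p.2 = ∅ then mu (p.1.parts.card + 1) else mu p.1.parts.card)
      = ∑ π' ∈ Finset.univ.filter (fun π' : Finpartition (s \ P0) => compat S' π'),
          ∑ B ∈ insert ∅ π'.parts,
            (if B = ∅ then mu (π'.parts.card + 1) else mu π'.parts.card) := by
    refine Finset.sum_finset_product T
      (Finset.univ.filter (fun π' : Finpartition (s \ P0) => compat S' π'))
      (fun π' => insert ∅ π'.parts) ?_
    intro p
    rw [hTdef, Finset.mem_filter, Finset.mem_filter]
    constructor
    · rintro ⟨_, h1, h2⟩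
      exact ⟨⟨Finset.mem_univ _, h1⟩, h2⟩
    · rintro ⟨⟨_, h1⟩, h2⟩
      exact ⟨Finset.mem_product.2 ⟨Finset.mem_univ _, Finset.mem_univ _⟩, h1, h2⟩
  rw [hprod]
  refine Finset.sum_eq_zero fun π' hπ' => ?_
  have hEne : (∅ : Finset ι) ∉ π'.parts := π'.bot_notMem
  rw [Finset.sum_insert hEne]
  rw [if_pos rfl]
  have hrest : ∑ B ∈ π'.parts,
      (if B = ∅ then mu (π'.parts.card + 1) else mu π'.parts.card)
      = π'.parts.card * mu π'.parts.card := by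
    rw [Finset.sum_congr rfl (fun B hB => if_neg (show B ≠ ∅ from π'.ne_bot hB))]
    rw [Finset.sum_const, nsmul_eq_mul]
  rw [hrest]
  have hpos : 1 ≤ π'.parts.card := Finset.card_pos.2 (π'.parts_nonempty hs'ne.ne_empty)
  exact muRec hpos

end Stmt9


/-- Strong factorization implies the small cumulant property:
`κ_H(u) = (∏_{h∈H} u_{{h}}) · O(α^{|H|-1})`. -/
theorem stmt_9 {F : Type*} [Field F] (r : ℕ) (u : Finset (Fin r) → RatFunc F)
    (h0 : u ∅ = 1) (hne : ∀ I, u I ≠ 0)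
    (hreg : ∀ I, NoPoleAtZero (u I)) (hreginv : ∀ I, NoPoleAtZero (u I)⁻¹)
    (hT : ∀ H : Finset (Fin r), 2 ≤ H.card → IsBigO (H.card - 1) (Terr u H)) :
    ∀ H : Finset (Fin r), 2 ≤ H.card →
      ∃ g : RatFunc F, NoPoleAtZero g ∧
        cum u H = (∏ h ∈ H, u {h}) * (RatFunc.X ^ (H.card - 1) * g) := by
  intro H hH
  set n := H.card with hn
  set P : RatFunc F := ∏ h ∈ H, u {h} with hP
  set W2 : Finset (Finset (Fin r)) := H.powerset.filter (fun W => 2 ≤ W.card) with hW2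
  set M : Finset (Finset (Fin r)) → ℤ := fun S =>
    ∑ π ∈ Finset.univ.filter (fun π : Finpartition H => Stmt9.compat S π),
      Stmt9.mu π.parts.card with hM
  -- Step 1: per-partition expansion
  have hπeq : ∀ π : Finpartition H,
      (Stmt9.mu π.parts.card) • ∏ B ∈ π.parts, u B
        = P * ∑ S ∈ W2.powerset,
            (if S ⊆ π.parts.biUnion (fun B => B.powerset.filter (fun W => 2 ≤ W.card))
              then (Stmt9.mu π.parts.card) • ∏ W ∈ S, Terr u W else 0) := by
    intro π
    have hp1 : ∏ B ∈ π.parts, u B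
        = P * ∏ W ∈ π.parts.biUnion (fun B => B.powerset.filter (fun W => 2 ≤ W.card)),
            (1 + Terr u W) := by
      have e1 : ∏ B ∈ π.parts, u B = ∏ B ∈ π.parts,
          ((∏ h ∈ B, u {h}) * ∏ W ∈ B.powerset.filter (fun W => 2 ≤ W.card),
            (1 + Terr u W)) :=
        Finset.prod_congr rfl fun B _ => Stmt9.factorization u h0 hne B
      rw [e1, Finset.prod_mul_distrib]
      congr 1
      · exact ((Finset.prod_biUnion π.disjoint).symm).trans
          (Finset.prod_congr π.biUnion_parts fun _ _ => rfl)
      · refine (Finset.prod_biUnion ?_).symm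
        intro a ha b hb hab
        refine Finset.disjoint_left.2 fun W hWa hWb => ?_
        rw [Finset.mem_coe] at ha hb
        rw [Finset.mem_filter, Finset.mem_powerset] at hWa hWb
        have hWne : W.Nonempty := Finset.card_pos.1 (by omega)
        obtain ⟨y, hy⟩ := hWne
        exact Finset.disjoint_left.1 (π.disjoint ha hb hab) (hWa.1 hy) (hWb.1 hy)
    have hp2 : ∏ W ∈ π.parts.biUnion (fun B => B.powerset.filter (fun W => 2 ≤ W.card)),
          (1 + Terr u W)
        = ∑ S ∈ (π.parts.biUnion
            (fun B => B.powerset.filter (fun W => 2 ≤ W.card))).powerset,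
            ∏ W ∈ S, Terr u W := by
      have h := Finset.prod_add (fun W => Terr u W) (fun _ => (1 : RatFunc F))
        (π.parts.biUnion (fun B => B.powerset.filter (fun W => 2 ≤ W.card)))
      simp only [Finset.prod_const_one, mul_one] at h
      rw [← h]
      exact Finset.prod_congr rfl fun W _ => by ring
    have hpow : (π.parts.biUnion
          (fun B => B.powerset.filter (fun W => 2 ≤ W.card))).powerset
        = W2.powerset.filter (fun S => S ⊆ π.parts.biUnion
            (fun B => B.powerset.filter (fun W => 2 ≤ W.card))) := by
      have hEsub : π.parts.biUnion (fun B => B.powerset.filter (fun W => 2 ≤ W.card))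
          ⊆ W2 := by
        intro W hW
        rw [Finset.mem_biUnion] at hW
        obtain ⟨B, hB, hWB⟩ := hW
        rw [Finset.mem_filter, Finset.mem_powerset] at hWB
        rw [hW2, Finset.mem_filter, Finset.mem_powerset]
        exact ⟨hWB.1.trans (π.le hB), hWB.2⟩
      ext S
      simp only [Finset.mem_powerset, Finset.mem_filter]
      exact ⟨fun h => ⟨h.trans hEsub, h⟩, fun h => h.2⟩
    rw [hp1, hp2, hpow, Finset.sum_filter, ← mul_smul_comm, Finset.smul_sum]
    congr 1
    refine Finset.sum_congr rfl fun S _ => ?_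
    split_ifs with h
    · rfl
    · exact smul_zero _
  -- Step 2: global rearrangement
  have hstep : cum u H = P * ∑ S ∈ W2.powerset, (M S) • ∏ W ∈ S, Terr u W := by
    have h1 : cum u H = ∑ π : Finpartition H,
        Stmt9.mu π.parts.card • ∏ B ∈ π.parts, u B := by
      rw [cum, finsum_eq_sum_of_fintype]
      simp only [Stmt9.mu]
    rw [h1, Finset.sum_congr rfl fun π _ => hπeq π, ← Finset.mul_sum]
    congr 1
    rw [Finset.sum_comm]
    refine Finset.sum_congr rfl fun S hS => ?_
    have hSW : S ⊆ W2 := Finset.mem_powerset.1 hS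
    have hiff : ∀ π : Finpartition H,
        (S ⊆ π.parts.biUnion (fun B => B.powerset.filter (fun W => 2 ≤ W.card)))
          ↔ Stmt9.compat S π := by
      intro π
      constructor
      · intro hc W hW
        have h := hc hW
        rw [Finset.mem_biUnion] at h
        obtain ⟨B, hB, hWB⟩ := h
        rw [Finset.mem_filter, Finset.mem_powerset] at hWB
        exact ⟨B, hB, hWB.1⟩
      · intro hc W hW
        obtain ⟨B, hB, hWB⟩ := hc W hW
        have hWW2 := hSW hW
        rw [hW2, Finset.mem_filter] at hWW2
        rw [Finset.mem_biUnion]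
        exact ⟨B, hB, Finset.mem_filter.2 ⟨Finset.mem_powerset.2 hWB, hWW2.2⟩⟩
    calc ∑ π : Finpartition H,
          (if S ⊆ π.parts.biUnion (fun B => B.powerset.filter (fun W => 2 ≤ W.card))
            then Stmt9.mu π.parts.card • ∏ W ∈ S, Terr u W else 0)
        = ∑ π : Finpartition H, (if Stmt9.compat S π
            then Stmt9.mu π.parts.card • ∏ W ∈ S, Terr u W else 0) :=
          Finset.sum_congr rfl fun π _ => if_congr (hiff π) rfl rfl
      _ = ∑ π ∈ Finset.univ.filter (fun π : Finpartition H => Stmt9.compat S π),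
            Stmt9.mu π.parts.card • ∏ W ∈ S, Terr u W := (Finset.sum_filter _ _).symm
      _ = M S • ∏ W ∈ S, Terr u W := Finset.sum_smul.symm
  -- Step 3: estimate
  have hprodT : ∀ S : Finset (Finset (Fin r)), S ⊆ W2 →
      ∃ y, NoPoleAtZero y ∧ ∏ W ∈ S, Terr u W
        = RatFunc.X ^ (∑ W ∈ S, (W.card - 1)) * y := by
    intro S
    induction S using Finset.induction with
    | empty => exact fun _ => ⟨1, Stmt9.np_one, by simp⟩
    | @insert a S ha ih =>
      intro hsub
      have haW2 : a ∈ W2 := hsub (Finset.mem_insert_self _ _)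
      rw [hW2, Finset.mem_filter, Finset.mem_powerset] at haW2
      obtain ⟨g1, hg1, heq1⟩ := hT a haW2.2
      obtain ⟨y, hy, heqy⟩ := ih fun x hx => hsub (Finset.mem_insert_of_mem hx)
      refine ⟨g1 * y, Stmt9.np_mul hg1 hy, ?_⟩
      rw [Finset.prod_insert ha, Finset.sum_insert ha, heq1, heqy, pow_add]
      ring
  have hgood : ∀ S ∈ W2.powerset.filter
      (fun S => n - 1 ≤ ∑ W ∈ S, (W.card - 1)),
      ∃ y, NoPoleAtZero y ∧ ∏ W ∈ S, Terr u W = RatFunc.X ^ (n - 1) * y := by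
    intro S hS
    rw [Finset.mem_filter, Finset.mem_powerset] at hS
    obtain ⟨y, hy, heq⟩ := hprodT S hS.1
    refine ⟨RatFunc.X ^ ((∑ W ∈ S, (W.card - 1)) - (n - 1)) * y,
      Stmt9.np_mul (Stmt9.np_pow Stmt9.np_X _) hy, ?_⟩
    rw [heq, ← mul_assoc, ← pow_add, Nat.add_sub_cancel' hS.2]
  classical
  set yf : Finset (Finset (Fin r)) → RatFunc F := fun S =>
    if h : ∃ y, NoPoleAtZero y ∧ ∏ W ∈ S, Terr u W = RatFunc.X ^ (n - 1) * y
    then h.choose else 1 with hyf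
  have hyfnp : ∀ S, NoPoleAtZero (yf S) := by
    intro S
    rw [hyf]
    dsimp only
    split_ifs with h
    · exact h.choose_spec.1
    · exact Stmt9.np_one
  refine ⟨∑ S ∈ W2.powerset.filter (fun S => n - 1 ≤ ∑ W ∈ S, (W.card - 1)),
      M S • yf S, ?_, ?_⟩
  · exact Stmt9.np_sum fun S _ => Stmt9.np_zsmul _ (hyfnp S)
  · rw [hstep]
    congr 1
    rw [← Finset.sum_filter_add_sum_filter_not W2.powerset
      (fun S => n - 1 ≤ ∑ W ∈ S, (W.card - 1))]
    have hbad : ∑ S ∈ W2.powerset.filter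
        (fun S => ¬ (n - 1 ≤ ∑ W ∈ S, (W.card - 1))),
        (M S) • ∏ W ∈ S, Terr u W = 0 := by
      refine Finset.sum_eq_zero fun S hS => ?_
      rw [Finset.mem_filter, Finset.mem_powerset] at hS
      have hMz : M S = 0 := by
        rw [hM]
        apply Stmt9.core
        · intro W hW
          have h := hS.1 hW
          rw [hW2, Finset.mem_filter, Finset.mem_powerset] at h
          exact h
        · have h2 := hS.2
          omega
      rw [hMz, zero_smul]
    rw [hbad, add_zero, Finset.mul_sum]
    refine Finset.sum_congr rfl fun S hS => ?_
    have hex := hgood S hS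
    have heq : ∏ W ∈ S, Terr u W = RatFunc.X ^ (n - 1) * yf S := by
      rw [hyf]
      dsimp only
      rw [dif_pos hex]
      exact hex.choose_spec.2
    rw [heq]
    exact (mul_smul_comm _ _ _).symm
end

section
/- For any partition λ, the product over boxes □ of λ with leg-length 0 of (α·a(□) + ℓ(□) + α) equals α^{λ₁} · ∏_i m_i(λ^t)!, where a(□) and ℓ(□) are the arm-length and leg-length of □ in λ, and m_i(λ^t) is the number of parts of the conjugate λ^t equal to i. -/
open scoped BigOperators
open Polynomial

/-- Conjugate partition (0-indexed): `conjPart f c` is the height of the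
column of index `c`, i.e. the number of rows `j` with `f j ≥ c+1`. -/
def conjPart (f : ℕ →₀ ℕ) (c : ℕ) : ℕ :=
  (f.support.filter (fun j => c + 1 ≤ f j)).card

/-- The boxes of the Young diagram of `f` (0-indexed): pairs `(i, j)` with
`i < f j` (`i` = column, `j` = row). -/
def cells (f : ℕ →₀ ℕ) : Finset (ℕ × ℕ) :=
  f.support.biUnion (fun j => (Finset.range (f j)).image (fun i => (i, j)))

/-- Arm-length of the box `b = (i,j)`: `a(□) = λ_j − (i+1)` (0-indexed). -/
def armL (f : ℕ →₀ ℕ) (b : ℕ × ℕ) : ℕ := f b.2 - (b.1 + 1)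

/-- Leg-length of the box `b = (i,j)`: `ℓ(□) = λ^t_i − (j+1)` (0-indexed). -/
def legL (f : ℕ →₀ ℕ) (b : ℕ × ℕ) : ℕ := conjPart f b.1 - (b.2 + 1)

/-- `m_i(λ^t)`: the number of columns of `λ` of height `i`. -/
def multConj (f : ℕ →₀ ℕ) (i : ℕ) : ℕ :=
  ((Finset.range (f 0)).filter (fun c => conjPart f c = i)).card

lemma conj_iff (f : ℕ →₀ ℕ) (hf : Antitone ⇑f) (c i : ℕ) :
    c + 1 ≤ conjPart f i ↔ i + 1 ≤ f c := by
  constructor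
  · intro h
    by_contra hc
    push_neg at hc
    have hsub : (f.support.filter (fun j => i + 1 ≤ f j)) ⊆ Finset.range c := by
      intro j hj
      simp only [Finset.mem_filter] at hj
      rw [Finset.mem_range]
      by_contra hjc
      push_neg at hjc
      have := hf hjc
      omega
    have h2 := Finset.card_le_card hsub
    rw [Finset.card_range] at h2
    unfold conjPart at h
    omega
  · intro h
    have hsub : Finset.range (c+1) ⊆ f.support.filter (fun j => i + 1 ≤ f j) := by
      intro j hj
      rw [Finset.mem_range] at hj
      have hfj : i + 1 ≤ f j := le_trans h (hf (by omega))
      simp only [Finset.mem_filter, Finsupp.mem_support_iff]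
      exact ⟨by omega, hfj⟩
    have h2 := Finset.card_le_card hsub
    rw [Finset.card_range] at h2
    unfold conjPart
    omega

lemma prod_Ico_sub (a b : ℕ) : ∏ i ∈ Finset.Ico a b, (b - i) = (b - a).factorial := by
  rcases le_or_gt a b with h | h
  · rw [Finset.prod_Ico_eq_prod_range]
    have : ∀ k ∈ Finset.range (b - a), b - (a + k) = (b - a) - k := fun k hk => by
      rw [Finset.mem_range] at hk; omega
    rw [Finset.prod_congr rfl this]
    set m := b - a
    calc ∏ k ∈ Finset.range m, (m - k)
        = ∏ k ∈ Finset.range m, (m - 1 - k + 1) := by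
          refine Finset.prod_congr rfl fun k hk => ?_
          rw [Finset.mem_range] at hk; omega
      _ = ∏ k ∈ Finset.range m, (k + 1) := Finset.prod_range_reflect (fun j => j + 1) m
      _ = m.factorial := Finset.prod_range_add_one_eq_factorial m
  · rw [Finset.Ico_eq_empty (by omega), Nat.sub_eq_zero_of_le h.le]
    simp

/-- `∏_{□∈λ, ℓ(□)=0} (α·a(□) + ℓ(□) + α) = α^{λ₁} · ∏_i m_i(λ^t)!`
(as polynomials in `α`). -/
theorem stmt_13 (f : ℕ →₀ ℕ) (hf : Antitone ⇑f) :
    (∏ b ∈ (cells f).filter (fun b => legL f b = 0),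
        ((X : ℚ[X]) * (armL f b : ℚ[X]) + (legL f b : ℚ[X]) + X))
      = X ^ (f 0) * ((∏ᶠ i : ℕ, (multConj f i).factorial : ℕ) : ℚ[X]) := by
  have hcell : ∀ i j : ℕ, (i, j) ∈ cells f ↔ i < f j := by
    intro i j
    simp only [cells, Finset.mem_biUnion, Finset.mem_image, Finset.mem_range,
      Finsupp.mem_support_iff, Prod.mk.injEq]
    constructor
    · rintro ⟨j', hj', i', hi', rfl, rfl⟩; exact hi'
    · intro h; exact ⟨j, by omega, i, h, rfl, rfl⟩
  -- the set of leg-0 boxes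
  have hset : (cells f).filter (fun b => legL f b = 0)
      = (Finset.range (f 0)).image (fun i => (i, conjPart f i - 1)) := by
    ext b
    obtain ⟨i, j⟩ := b
    rw [Finset.mem_filter]
    simp only [Finset.mem_filter, Finset.mem_image, Finset.mem_range, hcell, legL,
      Prod.mk.injEq]
    constructor
    · rintro ⟨hij, hleg⟩
      have h1 : j + 1 ≤ conjPart f i := (conj_iff f hf j i).2 hij
      have h0 : i + 1 ≤ f 0 := (conj_iff f hf 0 i).1 (by omega)
      exact ⟨i, by omega, rfl, by omega⟩
    · rintro ⟨i', hi', rfl, rfl⟩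
      have hg1 : 1 ≤ conjPart f i' := (conj_iff f hf 0 i').2 hi'
      have hif : i' + 1 ≤ f (conjPart f i' - 1) := by
        have := (conj_iff f hf (conjPart f i' - 1) i')
        omega
      exact ⟨hif, by omega⟩
  have hinj : ∀ a ∈ Finset.range (f 0), ∀ b ∈ Finset.range (f 0),
      (fun i => (i, conjPart f i - 1)) a = (fun i => (i, conjPart f i - 1)) b → a = b := by
    intro a _ b _ h
    exact congrArg Prod.fst h
  rw [hset, Finset.prod_image hinj]
  have key : ∀ i ∈ Finset.range (f 0),
      (X : ℚ[X]) * (armL f (i, conjPart f i - 1) : ℚ[X])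
          + (legL f (i, conjPart f i - 1) : ℚ[X]) + X
        = X * ((f (conjPart f i - 1) - i : ℕ) : ℚ[X]) := by
    intro i hi
    rw [Finset.mem_range] at hi
    have hg1 : 1 ≤ conjPart f i := (conj_iff f hf 0 i).2 hi
    have hif : i + 1 ≤ f (conjPart f i - 1) := by
      have := (conj_iff f hf (conjPart f i - 1) i)
      omega
    have hleg : legL f (i, conjPart f i - 1) = 0 := by
      simp only [legL]; omega
    have harm : armL f (i, conjPart f i - 1) + 1 = f (conjPart f i - 1) - i := by
      simp only [armL]; omega
    rw [hleg, ← harm]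
    push_cast
    ring
  rw [Finset.prod_congr rfl key, Finset.prod_mul_distrib, Finset.prod_const,
    Finset.card_range, ← Nat.cast_prod]
  congr 1
  norm_cast
  -- now a statement about natural numbers
  set T := (Finset.range (f 0)).image (conjPart f) with hT
  have hsupp : Function.mulSupport (fun c => (multConj f c).factorial) ⊆ ↑T := by
    intro c hc
    simp only [Function.mem_mulSupport] at hc
    have hne : multConj f c ≠ 0 := fun h => hc (by simp [h])
    obtain ⟨i, hi⟩ := Finset.card_pos.mp (Nat.pos_of_ne_zero hne)
    simp only [Finset.mem_filter, Finset.mem_range] at hi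
    exact Finset.mem_coe.2 (Finset.mem_image.2 ⟨i, Finset.mem_range.2 hi.1, hi.2⟩)
  rw [finprod_eq_prod_of_mulSupport_subset _ hsupp,
    ← Finset.prod_fiberwise_of_maps_to (g := conjPart f) (t := T)
      (fun i hi => Finset.mem_image_of_mem _ hi) (fun i => f (conjPart f i - 1) - i)]
  refine Finset.prod_congr rfl fun c hc => ?_
  obtain ⟨i0, hi0, hgi0⟩ := Finset.mem_image.mp hc
  rw [Finset.mem_range] at hi0
  have hc1 : 1 ≤ c := by
    have := (conj_iff f hf 0 i0).2 hi0
    omega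
  have hfiber : (Finset.range (f 0)).filter (fun i => conjPart f i = c)
      = Finset.Ico (f c) (f (c - 1)) := by
    ext i
    simp only [Finset.mem_filter, Finset.mem_range, Finset.mem_Ico]
    constructor
    · rintro ⟨hi, rfl⟩
      have hg1 : 1 ≤ conjPart f i := (conj_iff f hf 0 i).2 hi
      constructor
      · by_contra h
        push_neg at h
        have := (conj_iff f hf (conjPart f i) i).2 h
        omega
      · have := (conj_iff f hf (conjPart f i - 1) i)
        omega
    · rintro ⟨h1, h2⟩
      have hgc : c ≤ conjPart f i := by
        have := (conj_iff f hf (c - 1) i)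
        omega
      have hgc2 : conjPart f i ≤ c := by
        by_contra h
        push_neg at h
        have := (conj_iff f hf c i).1 (by omega)
        omega
      have hi0' : i < f 0 := by
        have := (conj_iff f hf 0 i)
        omega
      exact ⟨hi0', by omega⟩
  have hinner : ∀ i ∈ (Finset.range (f 0)).filter (fun i => conjPart f i = c),
      f (conjPart f i - 1) - i = f (c - 1) - i := by
    intro i hi
    simp only [Finset.mem_filter] at hi
    rw [hi.2]
  rw [Finset.prod_congr rfl hinner, hfiber, prod_Ico_sub]
  have hm : multConj f c = f (c - 1) - f c := by
    rw [multConj, hfiber, Nat.card_Ico]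
  rw [hm]
end

section
/- Let (u_I)_{I⊆[r]} be a family of elements of a commutative differential setting where each u_I is a polynomial in x₁,…,x_N, and let κ_I denote partial cumulants. Then ∑_{π∈P([r])} μ(π,{[r]}) · D_{1,2}(u_B : B ∈ π) = −(1/2) ∑_{m=1}^N ∑_{∅⊊I⊊[r]} (x_m ∂/∂x_m κ_I)(x_m ∂/∂x_m κ_{I^c}), where I^c = [r]∖I, D_{1,2} is defined by D_{1,2}(f₁,…,f_k) = ∑_m ∑_{i<j} f₁···(x_m∂_m f_i)···(x_m∂_m f_j)···f_k (and D_{1,2} of a single function is 0), and κ_I = ∑_{π∈P(I)} μ(π,{I}) ∏_{B∈π} u_B. -/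
open scoped BigOperators

/-- Partial cumulants `κ_I = ∑_{π∈P(I)} μ(π,{I}) ∏_{B∈π} u_B` of a family of
multivariate polynomials, with `μ(π,{I}) = (-1)^(#(π)-1)(#(π)-1)!`. -/
noncomputable def cumP (N r : ℕ) (u : Finset (Fin r) → MvPolynomial (Fin N) ℚ)
    (I : Finset (Fin r)) : MvPolynomial (Fin N) ℚ :=
  ∑ᶠ π : Finpartition I,
    (((-1 : ℤ) ^ (π.parts.card - 1) * (π.parts.card - 1).factorial : ℤ)) •
      ∏ B ∈ π.parts, u B

/-- `D_{1,2}` applied to the family `(g b)_{b ∈ s}` (a sum over unordered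
pairs of distinct indices, written as half the sum over ordered pairs):
`D_{1,2}(f₁,…,f_k) = ∑_m ∑_{i<j} f₁···(x_m∂_m f_i)···(x_m∂_m f_j)···f_k`. -/
noncomputable def D12 (N : ℕ) {β : Type*} [DecidableEq β] (s : Finset β)
    (g : β → MvPolynomial (Fin N) ℚ) : MvPolynomial (Fin N) ℚ :=
  MvPolynomial.C (1 / 2 : ℚ) *
    ∑ m : Fin N, ∑ i ∈ s, ∑ j ∈ s \ {i},
      ∏ l ∈ s,
        if l = i ∨ l = j then
          MvPolynomial.X m * MvPolynomial.pderiv m (g l)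
        else g l

open Finset MvPolynomial

namespace Stmt17Aux

/-- Möbius coefficient for a partition with `n` parts. -/
def mu (n : ℕ) : ℤ := (-1) ^ (n - 1) * (n - 1).factorial

/-! ### Leibniz rule for finite products -/

lemma pderiv_finset_prod {N : ℕ} {β : Type*} [DecidableEq β] (m : Fin N) (s : Finset β)
    (f : β → MvPolynomial (Fin N) ℚ) :
    pderiv m (∏ b ∈ s, f b) = ∑ b ∈ s, pderiv m (f b) * ∏ c ∈ s.erase b, f c := by
  induction s using Finset.induction_on with
  | empty => simp
  | @insert a s ha ih =>
    rw [Finset.prod_insert ha, pderiv_mul, ih, Finset.sum_insert ha, Finset.erase_insert ha,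
      Finset.mul_sum]
    congr 1
    refine Finset.sum_congr rfl fun b hb => ?_
    rw [Finset.erase_insert_of_ne (fun h => ha (by rw [h]; exact hb)),
      Finset.prod_insert (fun h => ha (Finset.mem_of_mem_erase h))]
    ring

/-! ### Sets of parts of finpartitions -/

variable {r : ℕ}

/-- The collection of possible `parts` of finpartitions of `J`. -/
def partsets (J : Finset (Fin r)) : Finset (Finset (Finset (Fin r))) :=
  Finset.univ.filter fun S => S.SupIndep id ∧ S.sup id = J ∧ ⊥ ∉ S

lemma mem_partsets {S : Finset (Finset (Fin r))} {J : Finset (Fin r)} :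
    S ∈ partsets J ↔ S.SupIndep id ∧ S.sup id = J ∧ ⊥ ∉ S := by
  simp [partsets]

lemma sum_finpartition {M : Type*} [AddCommMonoid M] (I : Finset (Fin r))
    (F : Finset (Finset (Fin r)) → M) :
    ∑ π : Finpartition I, F π.parts = ∑ S ∈ partsets I, F S := by
  refine Finset.sum_bij' (fun π _ => π.parts)
    (fun S hS => ⟨S, (mem_partsets.mp hS).1, (mem_partsets.mp hS).2.1,
      (mem_partsets.mp hS).2.2⟩)
    (fun π _ => mem_partsets.mpr ⟨π.supIndep, π.sup_parts, π.bot_notMem⟩)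
    (fun S hS => Finset.mem_univ _)
    (fun π _ => Finpartition.ext rfl)
    (fun S hS => rfl)
    (fun π _ => rfl)

lemma subset_of_mem_partsets {S : Finset (Finset (Fin r))} {J B : Finset (Fin r)}
    (hS : S ∈ partsets J) (hB : B ∈ S) : B ≤ J :=
  (Finset.le_sup (f := id) hB).trans (le_of_eq (mem_partsets.mp hS).2.1)

lemma ne_bot_of_mem_partsets {S : Finset (Finset (Fin r))} {J B : Finset (Fin r)}
    (hS : S ∈ partsets J) (hB : B ∈ S) : B ≠ ⊥ :=
  fun h => (mem_partsets.mp hS).2.2 (h ▸ hB)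

lemma disjoint_partsets {S₁ S₂ : Finset (Finset (Fin r))} {I : Finset (Fin r)}
    (h₁ : S₁ ∈ partsets I) (h₂ : S₂ ∈ partsets Iᶜ) : Disjoint S₁ S₂ := by
  rw [Finset.disjoint_left]
  intro B hB₁ hB₂
  have hI : B ≤ I := subset_of_mem_partsets h₁ hB₁
  have hIc : B ≤ Iᶜ := subset_of_mem_partsets h₂ hB₂
  have : B ≤ ⊥ := by
    have := le_inf hI hIc
    rwa [inf_compl_eq_bot] at this
  exact ne_bot_of_mem_partsets h₁ hB₁ (le_bot_iff.mp this)

lemma union_mem_partsets {S₁ S₂ : Finset (Finset (Fin r))} {I : Finset (Fin r)}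
    (h₁ : S₁ ∈ partsets I) (h₂ : S₂ ∈ partsets Iᶜ) :
    S₁ ∪ S₂ ∈ partsets (Finset.univ : Finset (Fin r)) := by
  obtain ⟨si₁, hsup₁, hb₁⟩ := mem_partsets.mp h₁
  obtain ⟨si₂, hsup₂, hb₂⟩ := mem_partsets.mp h₂
  refine mem_partsets.mpr ⟨?_, ?_, ?_⟩
  · rw [Finset.supIndep_iff_pairwiseDisjoint] at si₁ si₂ ⊢
    rw [Finset.coe_union]
    intro a ha b hb hne
    rcases ha with ha | ha <;> rcases hb with hb | hb
    · exact si₁ ha hb hne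
    · exact Disjoint.mono (subset_of_mem_partsets h₁ ha) (subset_of_mem_partsets h₂ hb)
        disjoint_compl_right
    · exact Disjoint.mono (subset_of_mem_partsets h₂ ha) (subset_of_mem_partsets h₁ hb)
        disjoint_compl_right.symm
    · exact si₂ ha hb hne
  · rw [Finset.sup_union, hsup₁, hsup₂, sup_compl_eq_top, Finset.top_eq_univ]
  · intro h
    rcases Finset.mem_union.mp h with h | h
    · exact hb₁ h
    · exact hb₂ h

lemma sdiff_mem_partsets {Sπ S : Finset (Finset (Fin r))}
    (hSπ : Sπ ∈ partsets (Finset.univ : Finset (Fin r))) (hsub : S ⊆ Sπ) :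
    Sπ \ S ∈ partsets (S.sup id)ᶜ := by
  obtain ⟨si, hsup, hb⟩ := mem_partsets.mp hSπ
  have hpd := Finset.supIndep_iff_pairwiseDisjoint.mp si
  refine mem_partsets.mpr ⟨si.subset (Finset.sdiff_subset), ?_, fun h => hb (Finset.mem_sdiff.mp h).1⟩
  ext a
  simp only [Finset.mem_sup, Finset.mem_compl, Finset.mem_sdiff, id]
  constructor
  · rintro ⟨B, ⟨hBπ, hBS⟩, haB⟩ haS
    obtain ⟨B', hB'S, haB'⟩ := haS
    have hne : B ≠ B' := fun e => hBS (e ▸ hB'S)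
    exact Finset.disjoint_left.mp
      (hpd (Finset.mem_coe.mpr hBπ) (Finset.mem_coe.mpr (hsub hB'S)) hne) haB haB'
  · intro haS
    have hau : a ∈ Sπ.sup id := by rw [hsup]; exact Finset.mem_univ a
    rw [Finset.mem_sup] at hau
    obtain ⟨B, hBπ, haB⟩ := hau
    refine ⟨B, ⟨hBπ, fun hBS => ?_⟩, haB⟩
    exact haS ⟨B, hBS, haB⟩

/-! ### The Möbius coefficient identity -/

lemma coeff_sum {γ : Type*} [DecidableEq γ] (s : Finset γ) {B₁ B₂ : γ}
    (h₁ : B₁ ∈ s) (h₂ : B₂ ∈ s) (hne : B₁ ≠ B₂) :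
    ∑ S ∈ s.powerset.filter (fun S => B₁ ∈ S ∧ B₂ ∉ S),
      mu S.card * mu (s.card - S.card) = - mu s.card := by
  have h2le : 2 ≤ s.card := Finset.one_lt_card.mpr ⟨B₁, h₁, B₂, h₂, hne⟩
  set t := (s.erase B₂).erase B₁ with ht
  have hB₁t : B₁ ∉ t := Finset.notMem_erase _ _
  have hB₂t : B₂ ∉ t := fun h => Finset.notMem_erase B₂ s (Finset.mem_of_mem_erase h)
  have hts : t ⊆ s := (Finset.erase_subset _ _).trans (Finset.erase_subset _ _)
  have hcard : t.card + 2 = s.card := by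
    rw [ht, Finset.card_erase_of_mem (Finset.mem_erase.mpr ⟨hne, h₁⟩),
      Finset.card_erase_of_mem h₂]
    omega
  have step1 : ∑ S ∈ s.powerset.filter (fun S => B₁ ∈ S ∧ B₂ ∉ S),
      mu S.card * mu (s.card - S.card)
      = ∑ T ∈ t.powerset, mu (T.card + 1) * mu (s.card - (T.card + 1)) := by
    refine Finset.sum_nbij' (fun S => S.erase B₁) (fun T => insert B₁ T) ?_ ?_ ?_ ?_ ?_
    · intro S hS
      simp only [Finset.mem_filter, Finset.mem_powerset] at hS
      obtain ⟨hSs, hB₁S, hB₂S⟩ := hS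
      rw [Finset.mem_powerset]
      intro a ha
      obtain ⟨haB₁, haS⟩ := Finset.mem_erase.mp ha
      exact Finset.mem_erase.mpr ⟨haB₁, Finset.mem_erase.mpr
        ⟨fun e => hB₂S (e ▸ haS), hSs haS⟩⟩
    · intro T hT
      rw [Finset.mem_powerset] at hT
      simp only [Finset.mem_filter, Finset.mem_powerset]
      refine ⟨Finset.insert_subset h₁ (hT.trans hts), Finset.mem_insert_self _ _, ?_⟩
      intro h
      rcases Finset.mem_insert.mp h with h | h
      · exact hne h.symm
      · exact hB₂t (hT h)
    · intro S hS
      simp only [Finset.mem_filter] at hS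
      exact Finset.insert_erase hS.2.1
    · intro T hT
      rw [Finset.mem_powerset] at hT
      exact Finset.erase_insert (fun h => hB₁t (hT h))
    · intro S hS
      simp only [Finset.mem_filter] at hS
      have hc : (S.erase B₁).card + 1 = S.card := by
        rw [Finset.card_erase_of_mem hS.2.1]
        have : 1 ≤ S.card := Finset.card_pos.mpr ⟨B₁, hS.2.1⟩
        omega
      rw [hc]
  rw [step1, Finset.sum_powerset, ← hcard]
  have hinner : ∀ j ∈ Finset.range (t.card + 1),
      ∑ T ∈ Finset.powersetCard j t, mu (T.card + 1) * mu (t.card + 2 - (T.card + 1))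
        = (t.card.choose j) • (mu (j + 1) * mu (t.card + 2 - (j + 1))) := by
    intro j hj
    rw [Finset.sum_congr rfl (fun T hT => by rw [(Finset.mem_powersetCard.mp hT).2]),
      Finset.sum_const, Finset.card_powersetCard]
  rw [Finset.sum_congr rfl hinner]
  set n := t.card with hn
  have hterm : ∀ j ∈ Finset.range (n + 1),
      (n.choose j) • (mu (j + 1) * mu (n + 2 - (j + 1))) = (-1) ^ n * n.factorial := by
    intro j hj
    have hjn : j ≤ n := by
      have := Finset.mem_range.mp hj; omega
    have e1 : mu (j + 1) = (-1) ^ j * j.factorial := by simp [mu]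
    have e2 : n + 2 - (j + 1) = (n - j) + 1 := by omega
    have e3 : mu ((n - j) + 1) = (-1) ^ (n - j) * (n - j).factorial := by simp [mu]
    have e4 : (n.choose j : ℤ) * (j.factorial : ℤ) * ((n - j).factorial : ℤ)
        = (n.factorial : ℤ) := by
      exact_mod_cast congrArg (Nat.cast (R := ℤ))
        (Nat.choose_mul_factorial_mul_factorial hjn)
    have e5 : (-1 : ℤ) ^ j * (-1) ^ (n - j) = (-1) ^ n := by
      rw [← pow_add]; congr 1; omega
    rw [e2, e1, e3, nsmul_eq_mul]
    calc (n.choose j : ℤ) * ((-1) ^ j * j.factorial * ((-1) ^ (n - j) * (n - j).factorial))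
        = ((n.choose j : ℤ) * (j.factorial : ℤ) * ((n - j).factorial : ℤ))
            * ((-1 : ℤ) ^ j * (-1) ^ (n - j)) := by ring
      _ = (-1) ^ n * n.factorial := by rw [e4, e5]; ring
  rw [Finset.sum_congr rfl hterm, Finset.sum_const, Finset.card_range]
  have hmu : mu (n + 2) = (-1) ^ (n + 1) * (n + 1).factorial := by simp [mu]
  rw [hmu, nsmul_eq_mul, Nat.factorial_succ]
  push_cast
  ring

/-! ### The building blocks -/

variable (N : ℕ) (u : Finset (Fin r) → MvPolynomial (Fin N) ℚ)

/-- Product with one marked (differentiated) part. -/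
noncomputable def QQ (m : Fin N) (S : Finset (Finset (Fin r))) (B₁ : Finset (Fin r)) :
    MvPolynomial (Fin N) ℚ :=
  ∏ l ∈ S, if l = B₁ then X m * pderiv m (u l) else u l

/-- Product with two marked (differentiated) parts. -/
noncomputable def PP (m : Fin N) (S : Finset (Finset (Fin r))) (B₁ B₂ : Finset (Fin r)) :
    MvPolynomial (Fin N) ℚ :=
  ∏ l ∈ S, if l = B₁ ∨ l = B₂ then X m * pderiv m (u l) else u l

lemma QQ_mul_QQ (m : Fin N) {S₁ S₂ : Finset (Finset (Fin r))} {B₁ B₂ : Finset (Fin r)}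
    (hd : Disjoint S₁ S₂) (h₁ : B₁ ∈ S₁) (h₂ : B₂ ∈ S₂) :
    QQ N u m S₁ B₁ * QQ N u m S₂ B₂ = PP N u m (S₁ ∪ S₂) B₁ B₂ := by
  rw [QQ, QQ, PP, Finset.prod_union hd]
  congr 1
  · refine Finset.prod_congr rfl fun l hl => ?_
    have hlB₂ : l ≠ B₂ := fun h => Finset.disjoint_left.mp hd hl (h ▸ h₂)
    by_cases h : l = B₁ <;> simp [h, hlB₂]
  · refine Finset.prod_congr rfl fun l hl => ?_
    have hlB₁ : l ≠ B₁ := fun h => Finset.disjoint_left.mp hd h₁ (h ▸ hl)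
    by_cases h : l = B₂ <;> simp [h, hlB₁]

lemma cumP_eq (I : Finset (Fin r)) :
    cumP N r u I = ∑ S ∈ partsets I, mu S.card • ∏ B ∈ S, u B := by
  rw [cumP, finsum_eq_sum_of_fintype]
  exact sum_finpartition I fun S => mu S.card • ∏ B ∈ S, u B

lemma Dcum (m : Fin N) (I : Finset (Fin r)) :
    X m * pderiv m (cumP N r u I)
      = ∑ S ∈ partsets I, ∑ B₁ ∈ S, mu S.card • QQ N u m S B₁ := by
  rw [cumP_eq, map_sum, Finset.mul_sum]
  refine Finset.sum_congr rfl fun S hS => ?_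
  rw [map_zsmul, mul_smul_comm, pderiv_finset_prod, Finset.mul_sum, Finset.smul_sum]
  refine Finset.sum_congr rfl fun B₁ hB₁ => ?_
  congr 1
  have hQ : QQ N u m S B₁ = (X m * pderiv m (u B₁)) * ∏ c ∈ S.erase B₁, u c := by
    rw [QQ, ← Finset.mul_prod_erase S _ hB₁, if_pos rfl]
    congr 1
    exact Finset.prod_congr rfl fun c hc => if_neg (Finset.ne_of_mem_erase hc)
  rw [hQ, mul_assoc]


/-! ### Flattening nested sums over a filtered product type -/

lemma peel {A B M : Type*} [Fintype A] [Fintype B] [AddCommMonoid M]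
    (p : A × B → Prop) [DecidablePred p] (t : Finset A)
    (hp : ∀ x : A × B, p x → x.1 ∈ t) (f : A × B → M) :
    ∑ x ∈ Finset.univ.filter p, f x
      = ∑ a ∈ t, ∑ b ∈ Finset.univ.filter (fun b => p (a, b)), f (a, b) := by
  rw [Finset.sum_filter, Fintype.sum_prod_type]
  simp_rw [← Finset.sum_filter]
  symm
  apply Finset.sum_subset (Finset.subset_univ t)
  intro a _ hat
  rw [Finset.filter_false_of_mem (fun b _ hpb => hat (hp (a, b) hpb)), Finset.sum_empty]

lemma last {A M : Type*} [Fintype A] [AddCommMonoid M]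
    (p : A → Prop) [DecidablePred p] (t : Finset A) (h : ∀ a, p a ↔ a ∈ t) (f : A → M) :
    ∑ a ∈ Finset.univ.filter p, f a = ∑ a ∈ t, f a := by
  congr 1
  ext a
  simp [h a]

/-! ### Index predicates and values -/

def LPred (x : Finset (Finset (Fin r)) × Finset (Fin r) × Finset (Fin r) ×
    Finset (Finset (Fin r))) : Prop :=
  x.1 ∈ partsets (Finset.univ : Finset (Fin r)) ∧ x.2.1 ∈ x.1 ∧ x.2.2.1 ∈ x.1 \ {x.2.1} ∧
    x.2.2.2 ∈ x.1.powerset.filter (fun S => x.2.1 ∈ S ∧ x.2.2.1 ∉ S)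

instance : DecidablePred (LPred (r := r)) := fun x => by unfold LPred; infer_instance

def RPred (y : Finset (Fin r) × Finset (Finset (Fin r)) × Finset (Finset (Fin r)) ×
    Finset (Fin r) × Finset (Fin r)) : Prop :=
  y.1 ∈ Finset.univ.filter (fun I : Finset (Fin r) => I ≠ ∅ ∧ I ≠ Finset.univ) ∧
    y.2.1 ∈ partsets y.1 ∧ y.2.2.1 ∈ partsets y.1ᶜ ∧ y.2.2.2.1 ∈ y.2.1 ∧ y.2.2.2.2 ∈ y.2.2.1

instance : DecidablePred (RPred (r := r)) := fun y => by unfold RPred; infer_instance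

noncomputable def LVal (m : Fin N) (x : Finset (Finset (Fin r)) × Finset (Fin r) ×
    Finset (Fin r) × Finset (Finset (Fin r))) : MvPolynomial (Fin N) ℚ :=
  (mu x.2.2.2.card * mu (x.1.card - x.2.2.2.card)) • PP N u m x.1 x.2.1 x.2.2.1

noncomputable def RVal (m : Fin N) (y : Finset (Fin r) × Finset (Finset (Fin r)) ×
    Finset (Finset (Fin r)) × Finset (Fin r) × Finset (Fin r)) : MvPolynomial (Fin N) ℚ :=
  (mu y.2.1.card * mu y.2.2.1.card) • PP N u m (y.2.1 ∪ y.2.2.1) y.2.2.2.1 y.2.2.2.2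

lemma Lflat (m : Fin N) :
    ∑ x ∈ Finset.univ.filter (LPred (r := r)), LVal N u m x
      = ∑ Sπ ∈ partsets (Finset.univ : Finset (Fin r)), ∑ B₁ ∈ Sπ, ∑ B₂ ∈ Sπ \ {B₁},
          ∑ S ∈ Sπ.powerset.filter (fun S => B₁ ∈ S ∧ B₂ ∉ S),
            (mu S.card * mu (Sπ.card - S.card)) • PP N u m Sπ B₁ B₂ := by
  rw [peel (LPred (r := r)) (partsets Finset.univ) (fun x hx => hx.1) (LVal N u m)]
  refine Finset.sum_congr rfl fun Sπ hSπ => ?_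
  rw [peel _ Sπ (fun x hx => hx.2.1) _]
  refine Finset.sum_congr rfl fun B₁ hB₁ => ?_
  rw [peel _ (Sπ \ {B₁}) (fun x hx => hx.2.2.1) _]
  refine Finset.sum_congr rfl fun B₂ hB₂ => ?_
  rw [last _ (Sπ.powerset.filter (fun S => B₁ ∈ S ∧ B₂ ∉ S))
    (fun S => ⟨fun h => h.2.2.2, fun h => ⟨hSπ, hB₁, hB₂, h⟩⟩) _]
  exact Finset.sum_congr rfl fun S _ => rfl

lemma Rflat (m : Fin N) :
    ∑ y ∈ Finset.univ.filter (RPred (r := r)), RVal N u m y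
      = ∑ I ∈ Finset.univ.filter (fun I : Finset (Fin r) => I ≠ ∅ ∧ I ≠ Finset.univ),
          ∑ S₁ ∈ partsets I, ∑ S₂ ∈ partsets Iᶜ, ∑ B₁ ∈ S₁, ∑ B₂ ∈ S₂,
            (mu S₁.card * mu S₂.card) • PP N u m (S₁ ∪ S₂) B₁ B₂ := by
  rw [peel (RPred (r := r)) _ (fun y hy => hy.1) (RVal N u m)]
  refine Finset.sum_congr rfl fun I hI => ?_
  rw [peel _ (partsets I) (fun y hy => hy.2.1) _]
  refine Finset.sum_congr rfl fun S₁ hS₁ => ?_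
  rw [peel _ (partsets Iᶜ) (fun y hy => hy.2.2.1) _]
  refine Finset.sum_congr rfl fun S₂ hS₂ => ?_
  rw [peel _ S₁ (fun y hy => hy.2.2.2.1) _]
  refine Finset.sum_congr rfl fun B₁ hB₁ => ?_
  rw [last _ S₂ (fun B₂ => ⟨fun h => h.2.2.2.2, fun h => ⟨hI, hS₁, hS₂, hB₁, h⟩⟩) _]
  exact Finset.sum_congr rfl fun B₂ _ => rfl

/-! ### The bijection -/

lemma LR (m : Fin N) :
    ∑ x ∈ Finset.univ.filter (LPred (r := r)), LVal N u m x
      = ∑ y ∈ Finset.univ.filter (RPred (r := r)), RVal N u m y := by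
  refine Finset.sum_nbij'
    (fun x => (x.2.2.2.sup id, x.2.2.2, x.1 \ x.2.2.2, x.2.1, x.2.2.1))
    (fun y => (y.2.1 ∪ y.2.2.1, y.2.2.2.1, y.2.2.2.2, y.2.1)) ?_ ?_ ?_ ?_ ?_
  · rintro ⟨Sπ, B₁, B₂, S⟩ hx
    simp only [Finset.mem_filter, Finset.mem_univ, true_and] at hx ⊢
    obtain ⟨hSπ, hB₁, hB₂', hS'⟩ := hx
    obtain ⟨hB₂π, hB₂ne⟩ := Finset.mem_sdiff.mp hB₂'
    obtain ⟨hSp, hB₁S, hB₂S⟩ := Finset.mem_filter.mp hS'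
    have hsub : S ⊆ Sπ := Finset.mem_powerset.mp hSp
    have hSpart : S ∈ partsets (S.sup id) := mem_partsets.mpr
      ⟨(mem_partsets.mp hSπ).1.subset hsub, rfl, fun h => (mem_partsets.mp hSπ).2.2 (hsub h)⟩
    have hdiffpart : Sπ \ S ∈ partsets (S.sup id)ᶜ := sdiff_mem_partsets hSπ hsub
    have hB₂mem : B₂ ∈ Sπ \ S := Finset.mem_sdiff.mpr ⟨hB₂π, hB₂S⟩
    have hbot : ∀ {B : Finset (Fin r)}, B ≤ (∅ : Finset (Fin r)) → B = ⊥ :=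
      fun h => le_bot_iff.mp (by rwa [Finset.bot_eq_empty])
    have hne₁ : S.sup id ≠ ∅ := by
      intro h
      have hle : B₁ ≤ S.sup id := Finset.le_sup (f := id) hB₁S
      rw [h] at hle
      exact ne_bot_of_mem_partsets hSπ hB₁ (hbot hle)
    have hne₂ : S.sup id ≠ Finset.univ := by
      intro h
      have hle : B₂ ≤ (S.sup id)ᶜ := subset_of_mem_partsets hdiffpart hB₂mem
      rw [h, compl_univ] at hle
      exact ne_bot_of_mem_partsets hSπ hB₂π (hbot hle)
    exact ⟨Finset.mem_filter.mpr ⟨Finset.mem_univ _, hne₁, hne₂⟩, hSpart, hdiffpart,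
      hB₁S, hB₂mem⟩
  · rintro ⟨I, S₁, S₂, B₁, B₂⟩ hy
    simp only [Finset.mem_filter, Finset.mem_univ, true_and] at hy ⊢
    obtain ⟨hI, hS₁, hS₂, hB₁, hB₂⟩ := hy
    have hd : Disjoint S₁ S₂ := disjoint_partsets hS₁ hS₂
    have hB₂S₁ : B₂ ∉ S₁ := Finset.disjoint_right.mp hd hB₂
    have hB₂B₁ : B₂ ≠ B₁ := fun e => hB₂S₁ (e ▸ hB₁)
    exact ⟨union_mem_partsets hS₁ hS₂, Finset.mem_union_left _ hB₁,
      Finset.mem_sdiff.mpr ⟨Finset.mem_union_right _ hB₂, Finset.notMem_singleton.mpr hB₂B₁⟩,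
      Finset.mem_filter.mpr ⟨Finset.mem_powerset.mpr Finset.subset_union_left, hB₁, hB₂S₁⟩⟩
  · rintro ⟨Sπ, B₁, B₂, S⟩ hx
    simp only [Finset.mem_filter, Finset.mem_univ, true_and] at hx
    have hsub : S ⊆ Sπ := Finset.mem_powerset.mp (Finset.mem_filter.mp hx.2.2.2).1
    dsimp only
    rw [Finset.union_sdiff_of_subset hsub]
  · rintro ⟨I, S₁, S₂, B₁, B₂⟩ hy
    simp only [Finset.mem_filter, Finset.mem_univ, true_and] at hy
    obtain ⟨hI, hS₁, hS₂, hB₁, hB₂⟩ := hy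
    dsimp only
    rw [(mem_partsets.mp hS₁).2.1, Finset.union_sdiff_cancel_left (disjoint_partsets hS₁ hS₂)]
  · rintro ⟨Sπ, B₁, B₂, S⟩ hx
    simp only [Finset.mem_filter, Finset.mem_univ, true_and] at hx
    have hsub : S ⊆ Sπ := Finset.mem_powerset.mp (Finset.mem_filter.mp hx.2.2.2).1
    show (mu S.card * mu (Sπ.card - S.card)) • PP N u m Sπ B₁ B₂
      = (mu S.card * mu ((Sπ \ S).card)) • PP N u m (S ∪ Sπ \ S) B₁ B₂
    rw [Finset.card_sdiff_of_subset hsub, Finset.union_sdiff_of_subset hsub]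

/-! ### Expanding the right-hand side -/

lemma expandR (m : Fin N) (I : Finset (Fin r)) :
    (X m * pderiv m (cumP N r u I)) * (X m * pderiv m (cumP N r u Iᶜ))
      = ∑ S₁ ∈ partsets I, ∑ S₂ ∈ partsets Iᶜ, ∑ B₁ ∈ S₁, ∑ B₂ ∈ S₂,
          (mu S₁.card * mu S₂.card) • PP N u m (S₁ ∪ S₂) B₁ B₂ := by
  rw [Dcum, Dcum, Finset.sum_mul_sum]
  refine Finset.sum_congr rfl fun S₁ hS₁ => ?_
  refine Finset.sum_congr rfl fun S₂ hS₂ => ?_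
  rw [Finset.sum_mul_sum]
  refine Finset.sum_congr rfl fun B₁ hB₁ => ?_
  refine Finset.sum_congr rfl fun B₂ hB₂ => ?_
  rw [smul_mul_smul_comm, QQ_mul_QQ N u m (disjoint_partsets hS₁ hS₂) hB₁ hB₂]

/-! ### The core identity, for a fixed variable index -/

lemma core (m : Fin N) :
    ∑ π : Finpartition (Finset.univ : Finset (Fin r)),
        mu π.parts.card • ∑ B₁ ∈ π.parts, ∑ B₂ ∈ π.parts \ {B₁}, PP N u m π.parts B₁ B₂
      = - ∑ I ∈ Finset.univ.filter (fun I : Finset (Fin r) => I ≠ ∅ ∧ I ≠ Finset.univ),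
          (X m * pderiv m (cumP N r u I)) * (X m * pderiv m (cumP N r u Iᶜ)) := by
  refine (sum_finpartition Finset.univ
    (fun S => mu S.card • ∑ B₁ ∈ S, ∑ B₂ ∈ S \ {B₁}, PP N u m S B₁ B₂)).trans ?_
  have hLHS : ∀ Sπ ∈ partsets (Finset.univ : Finset (Fin r)),
      mu Sπ.card • ∑ B₁ ∈ Sπ, ∑ B₂ ∈ Sπ \ {B₁}, PP N u m Sπ B₁ B₂
        = - ∑ B₁ ∈ Sπ, ∑ B₂ ∈ Sπ \ {B₁},
            ∑ S ∈ Sπ.powerset.filter (fun S => B₁ ∈ S ∧ B₂ ∉ S),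
              (mu S.card * mu (Sπ.card - S.card)) • PP N u m Sπ B₁ B₂ := by
    intro Sπ hSπ
    rw [Finset.smul_sum, ← Finset.sum_neg_distrib]
    refine Finset.sum_congr rfl fun B₁ hB₁ => ?_
    rw [Finset.smul_sum, ← Finset.sum_neg_distrib]
    refine Finset.sum_congr rfl fun B₂ hB₂ => ?_
    obtain ⟨hB₂π, hB₂ne⟩ := Finset.mem_sdiff.mp hB₂
    have hne : B₁ ≠ B₂ := fun e => (Finset.notMem_singleton.mp hB₂ne) e.symm
    have hcs := coeff_sum Sπ hB₁ hB₂π hne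
    have hmu : mu Sπ.card
        = - ∑ S ∈ Sπ.powerset.filter (fun S => B₁ ∈ S ∧ B₂ ∉ S),
            mu S.card * mu (Sπ.card - S.card) := by rw [hcs]; ring
    rw [hmu, neg_smul, Finset.sum_smul]
  rw [Finset.sum_congr rfl hLHS, Finset.sum_neg_distrib]
  congr 1
  rw [← Lflat N u m, LR N u m, Rflat N u m]
  exact Finset.sum_congr rfl fun I hI => (expandR N u m I).symm

end Stmt17Aux

/-- `∑_{π∈P([r])} μ(π,{[r]}) · D_{1,2}(u_B : B ∈ π)
  = −(1/2) ∑_m ∑_{∅⊊I⊊[r]} (x_m ∂_m κ_I)(x_m ∂_m κ_{I^c})`. -/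
theorem stmt_17 (N r : ℕ) (u : Finset (Fin r) → MvPolynomial (Fin N) ℚ) :
    (∑ᶠ π : Finpartition (Finset.univ : Finset (Fin r)),
        (((-1 : ℤ) ^ (π.parts.card - 1) * (π.parts.card - 1).factorial : ℤ)) •
          D12 N π.parts u)
      = -(MvPolynomial.C (1 / 2 : ℚ) *
          ∑ m : Fin N,
            ∑ I ∈ Finset.univ.filter
                (fun I : Finset (Fin r) => I ≠ ∅ ∧ I ≠ Finset.univ),
              (MvPolynomial.X m * MvPolynomial.pderiv m (cumP N r u I)) *
                (MvPolynomial.X m * MvPolynomial.pderiv m (cumP N r u Iᶜ))) := by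
  rw [finsum_eq_sum_of_fintype]
  have h1 : ∀ π : Finpartition (Finset.univ : Finset (Fin r)),
      (((-1 : ℤ) ^ (π.parts.card - 1) * (π.parts.card - 1).factorial : ℤ)) • D12 N π.parts u
        = MvPolynomial.C (1 / 2 : ℚ) * (Stmt17Aux.mu π.parts.card •
            ∑ m : Fin N, ∑ B₁ ∈ π.parts, ∑ B₂ ∈ π.parts \ {B₁},
              Stmt17Aux.PP N u m π.parts B₁ B₂) := by
    intro π
    rw [mul_smul_comm]
    rfl
  rw [Finset.sum_congr rfl (fun π _ => h1 π), ← Finset.mul_sum]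
  rw [Finset.sum_congr rfl
    (fun π _ => Finset.smul_sum (r := Stmt17Aux.mu π.parts.card)), Finset.sum_comm]
  rw [Finset.sum_congr rfl (fun m _ => Stmt17Aux.core N u m), Finset.sum_neg_distrib, mul_neg]
end

section
/- For any partitions λ¹,…,λ^r, any g ∈ [r], and any box b of λ^g, the arm-length of b in the entry-wise sum λ^{[r]} = λ¹ ⊕ ··· ⊕ λ^r decomposes as a_{[r]}(b) = ∑_{i=1}^r a_i(b), where for the row index ρ of b: a_g(b) is the arm-length of b in λ^g; for i < g, a_i(b) is the number of boxes in row ρ of λ^i whose column in λ^i is strictly shorter than the column of b in λ^g; and for i > g, a_i(b) is the number of boxes in row ρ of λ^i whose column in λ^i has height at most the height of the column of b in λ^g. Here boxes of λ^{[r]} are identified with boxes of the λ^i by sorting all columns of λ¹,…,λ^r in decreasing order of height, breaking ties by placing columns of λ^{i} before those of λ^{j} when i < j; moreover under this identification the leg-length of b in λ^{[r]} equals its leg-length in λ^g. -/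
open scoped BigOperators

lemma conjPart_dual (f : ℕ →₀ ℕ) (hf : Antitone ⇑f) (c ρ : ℕ) :
    c < f ρ ↔ ρ < conjPart f c := by
  unfold conjPart
  constructor
  · intro h
    have hsub : Finset.range (ρ+1) ⊆ f.support.filter (fun j => c + 1 ≤ f j) := by
      intro j hj
      simp only [Finset.mem_range] at hj
      have hle : f ρ ≤ f j := hf (by omega)
      simp only [Finset.mem_filter, Finsupp.mem_support_iff]
      exact ⟨by omega, by omega⟩
    have := Finset.card_le_card hsub
    simp only [Finset.card_range] at this
    omega
  · intro h
    by_contra hcon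
    push_neg at hcon
    have hsub : f.support.filter (fun j => c + 1 ≤ f j) ⊆ Finset.range ρ := by
      intro j hj
      simp only [Finset.mem_filter] at hj
      simp only [Finset.mem_range]
      by_contra hj2
      have : f j ≤ f ρ := hf (by omega)
      omega
    have := Finset.card_le_card hsub
    simp only [Finset.card_range] at this
    omega

/-- Arm-length decomposition in an entry-wise sum of partitions.
Let `λ¹,…,λ^r` be partitions, `g ∈ [r]`, and `b = (c, ρ)` a box of `λ^g`
(column `c`, row `ρ`, 0-indexed) whose column has height `h`.  Identify the
boxes of `λ^{[r]} = λ¹ ⊕ ⋯ ⊕ λ^r` with boxes of the `λ^i` by sorting all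
columns decreasingly by height, ties broken by placing columns of `λ^i`
before those of `λ^j` for `i < j`; thus `b` sits in column
`c' = (#columns of height > h among all λ^i)
   + (#columns of height = h among λ^i, i < g)
   + (#columns of λ^g before c of height = h)` of `λ^{[r]}`.
Then the leg-length is preserved (`conjPart λ^{[r]} c' = h`) and the
arm-length of `b` in `λ^{[r]}` equals `∑_i a_i(b)`, where `a_g(b)` is the
arm-length in `λ^g`, for `i < g`, `a_i(b)` counts boxes in row `ρ` of `λ^i`
with column height `< h`, and for `i > g` those with column height `≤ h`. -/
theorem stmt_19 (r : ℕ) (lam : Fin r → (ℕ →₀ ℕ))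
    (hlam : ∀ i, Antitone ⇑(lam i))
    (g : Fin r) (c ρ : ℕ) (hc : c < lam g ρ) :
    let h := conjPart (lam g) c
    let tall := fun i : Fin r =>
      ((Finset.range (lam i 0)).filter (fun c'' => h < conjPart (lam i) c'')).card
    let eqh := fun i : Fin r =>
      ((Finset.range (lam i 0)).filter (fun c'' => conjPart (lam i) c'' = h)).card
    let c' := (∑ i : Fin r, tall i)
      + (∑ i ∈ Finset.univ.filter (fun i : Fin r => i < g), eqh i)
      + (c - tall g)
    conjPart (∑ i : Fin r, lam i) c' = h ∧
      (∑ i : Fin r, lam i) ρ - (c' + 1)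
        = (lam g ρ - (c + 1))
          + (∑ i ∈ Finset.univ.filter (fun i : Fin r => i < g),
              ((Finset.range (lam i ρ)).filter
                (fun c'' => conjPart (lam i) c'' < h)).card)
          + (∑ i ∈ Finset.univ.filter (fun i : Fin r => g < i),
              ((Finset.range (lam i ρ)).filter
                (fun c'' => conjPart (lam i) c'' ≤ h)).card) := by
  intro h tall eqh c'
  classical
  have dual : ∀ i : Fin r, ∀ x t : ℕ, x < lam i t ↔ t < conjPart (lam i) x :=
    fun i x t => conjPart_dual (lam i) (hlam i) x t
  have hρh : ρ < h := (dual g c ρ).mp hc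
  have h1 : 1 ≤ h := by omega
  have hmp : ∀ i, lam i h ≤ lam i (h-1) := fun i => hlam i (by omega)
  have hpρ : ∀ i, lam i (h-1) ≤ lam i ρ := fun i => hlam i (by omega)
  have hp0 : ∀ i, lam i (h-1) ≤ lam i 0 := fun i => hlam i (Nat.zero_le _)
  have hm0 : ∀ i, lam i h ≤ lam i 0 := fun i => hlam i (Nat.zero_le _)
  have hρ0 : ∀ i, lam i ρ ≤ lam i 0 := fun i => hlam i (Nat.zero_le _)
  have hcp : c < lam g (h-1) := (dual g c (h-1)).mpr (by omega)
  have hcm : lam g h ≤ c := by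
    by_contra hx
    push_neg at hx
    have := (dual g c h).mp hx
    omega
  -- tall and eqh counts
  have htall : ∀ i, tall i = lam i h := by
    intro i
    show ((Finset.range (lam i 0)).filter (fun c'' => h < conjPart (lam i) c'')).card
        = lam i h
    have hset : (Finset.range (lam i 0)).filter (fun c'' => h < conjPart (lam i) c'')
        = Finset.range (lam i h) := by
      ext x
      simp only [Finset.mem_filter, Finset.mem_range]
      have d2 := dual i x h
      have := hm0 i
      omega
    rw [hset, Finset.card_range]
  have heqh : ∀ i, eqh i = lam i (h-1) - lam i h := by
    intro i
    show ((Finset.range (lam i 0)).filter (fun c'' => conjPart (lam i) c'' = h)).card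
        = lam i (h-1) - lam i h
    have hset : (Finset.range (lam i 0)).filter (fun c'' => conjPart (lam i) c'' = h)
        = Finset.Ico (lam i h) (lam i (h-1)) := by
      ext x
      simp only [Finset.mem_filter, Finset.mem_range, Finset.mem_Ico]
      have d1 := dual i x (h-1)
      have d2 := dual i x h
      have := hp0 i
      omega
    rw [hset, Nat.card_Ico]
  have hZ : ∀ i, ((Finset.range (lam i ρ)).filter
      (fun c'' => conjPart (lam i) c'' < h)).card = lam i ρ - lam i (h-1) := by
    intro i
    have hset : (Finset.range (lam i ρ)).filter (fun c'' => conjPart (lam i) c'' < h)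
        = Finset.Ico (lam i (h-1)) (lam i ρ) := by
      ext x
      simp only [Finset.mem_filter, Finset.mem_range, Finset.mem_Ico]
      have d1 := dual i x (h-1)
      have := hpρ i
      omega
    rw [hset, Nat.card_Ico]
  have hW : ∀ i, ((Finset.range (lam i ρ)).filter
      (fun c'' => conjPart (lam i) c'' ≤ h)).card = lam i ρ - lam i h := by
    intro i
    have hset : (Finset.range (lam i ρ)).filter (fun c'' => conjPart (lam i) c'' ≤ h)
        = Finset.Ico (lam i h) (lam i ρ) := by
      ext x
      simp only [Finset.mem_filter, Finset.mem_range, Finset.mem_Ico]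
      have d2 := dual i x h
      have := hpρ i
      have := hmp i
      omega
    rw [hset, Nat.card_Ico]
  -- value of c'
  have hc'v : c' = (∑ i : Fin r, lam i h)
      + (∑ i ∈ Finset.univ.filter (fun i : Fin r => i < g), (lam i (h-1) - lam i h))
      + (c - lam g h) := by
    show (∑ i : Fin r, tall i)
      + (∑ i ∈ Finset.univ.filter (fun i : Fin r => i < g), eqh i)
      + (c - tall g) = _
    simp only [htall, heqh]
  -- splitting sums into i < g, i = g, g < i
  have hgB : g ∉ Finset.univ.filter (fun i : Fin r => g < i) := by simp
  have hAc : Finset.univ.filter (fun i : Fin r => ¬ i < g)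
      = insert g (Finset.univ.filter (fun i : Fin r => g < i)) := by
    ext i
    simp only [Finset.mem_filter, Finset.mem_univ, true_and, Finset.mem_insert, not_lt]
    constructor
    · intro hi
      rcases eq_or_lt_of_le hi with h' | h'
      · exact Or.inl h'.symm
      · exact Or.inr h'
    · rintro (rfl | hi)
      · exact le_refl _
      · exact le_of_lt hi
  have hsplit : ∀ v : Fin r → ℕ, ∑ i : Fin r, v i
      = (∑ i ∈ Finset.univ.filter (fun i : Fin r => i < g), v i) + v g
        + ∑ i ∈ Finset.univ.filter (fun i : Fin r => g < i), v i := by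
    intro v
    rw [← Finset.sum_filter_add_sum_filter_not Finset.univ (fun i => i < g) v, hAc,
      Finset.sum_insert hgB]
    omega
  -- Finsupp sum facts
  have hFapp : ∀ j, (∑ i : Fin r, lam i) j = ∑ i : Fin r, lam i j :=
    fun j => Finsupp.finset_sum_apply _ _ _
  have hFanti : Antitone ⇑(∑ i : Fin r, lam i) := by
    intro a b hab
    have : (∑ i : Fin r, lam i) b ≤ (∑ i : Fin r, lam i) a := by
      rw [hFapp, hFapp]
      exact Finset.sum_le_sum fun i _ => hlam i hab
    exact this
  have dualF := conjPart_dual _ hFanti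
  -- sum comparisons
  have tA : ∑ i ∈ Finset.univ.filter (fun i : Fin r => i < g), (lam i (h-1) - lam i h)
      = (∑ i ∈ Finset.univ.filter (fun i : Fin r => i < g), lam i (h-1))
        - ∑ i ∈ Finset.univ.filter (fun i : Fin r => i < g), lam i h :=
    Finset.sum_tsub_distrib _ fun i _ => hmp i
  have tZ : ∑ i ∈ Finset.univ.filter (fun i : Fin r => i < g), (lam i ρ - lam i (h-1))
      = (∑ i ∈ Finset.univ.filter (fun i : Fin r => i < g), lam i ρ)
        - ∑ i ∈ Finset.univ.filter (fun i : Fin r => i < g), lam i (h-1) :=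
    Finset.sum_tsub_distrib _ fun i _ => hpρ i
  have tW : ∑ i ∈ Finset.univ.filter (fun i : Fin r => g < i), (lam i ρ - lam i h)
      = (∑ i ∈ Finset.univ.filter (fun i : Fin r => g < i), lam i ρ)
        - ∑ i ∈ Finset.univ.filter (fun i : Fin r => g < i), lam i h :=
    Finset.sum_tsub_distrib _ fun i _ => le_trans (hmp i) (hpρ i)
  have eA1 : (∑ i ∈ Finset.univ.filter (fun i : Fin r => i < g), lam i h)
      ≤ ∑ i ∈ Finset.univ.filter (fun i : Fin r => i < g), lam i (h-1) :=
    Finset.sum_le_sum fun i _ => hmp i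
  have eA2 : (∑ i ∈ Finset.univ.filter (fun i : Fin r => i < g), lam i (h-1))
      ≤ ∑ i ∈ Finset.univ.filter (fun i : Fin r => i < g), lam i ρ :=
    Finset.sum_le_sum fun i _ => hpρ i
  have eB1 : (∑ i ∈ Finset.univ.filter (fun i : Fin r => g < i), lam i h)
      ≤ ∑ i ∈ Finset.univ.filter (fun i : Fin r => g < i), lam i (h-1) :=
    Finset.sum_le_sum fun i _ => hmp i
  have eB2 : (∑ i ∈ Finset.univ.filter (fun i : Fin r => g < i), lam i (h-1))
      ≤ ∑ i ∈ Finset.univ.filter (fun i : Fin r => g < i), lam i ρ :=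
    Finset.sum_le_sum fun i _ => hpρ i
  have s1 : ∑ i : Fin r, lam i ρ
      = (∑ i ∈ Finset.univ.filter (fun i : Fin r => i < g), lam i ρ) + lam g ρ
        + ∑ i ∈ Finset.univ.filter (fun i : Fin r => g < i), lam i ρ := hsplit _
  have s2 : ∑ i : Fin r, lam i h
      = (∑ i ∈ Finset.univ.filter (fun i : Fin r => i < g), lam i h) + lam g h
        + ∑ i ∈ Finset.univ.filter (fun i : Fin r => g < i), lam i h := hsplit _
  have s3 : ∑ i : Fin r, lam i (h-1)
      = (∑ i ∈ Finset.univ.filter (fun i : Fin r => i < g), lam i (h-1)) + lam g (h-1)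
        + ∑ i ∈ Finset.univ.filter (fun i : Fin r => g < i), lam i (h-1) := hsplit _
  constructor
  · -- leg-length preserved
    have hub : (∑ i : Fin r, lam i h) ≤ c' := by
      rw [hc'v]; omega
    have hlb : c' < ∑ i : Fin r, lam i (h-1) := by
      rw [hc'v]; omega
    have r1 : h - 1 < conjPart (∑ i : Fin r, lam i) c' := by
      refine (dualF c' (h-1)).mp ?_
      rw [hFapp]
      exact hlb
    have r2 : ¬ h < conjPart (∑ i : Fin r, lam i) c' := by
      intro hh
      have := (dualF c' h).mpr hh
      rw [hFapp] at this
      omega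
    omega
  · -- arm-length decomposition
    have eZ : ∑ i ∈ Finset.univ.filter (fun i : Fin r => i < g),
        ((Finset.range (lam i ρ)).filter (fun c'' => conjPart (lam i) c'' < h)).card
        = ∑ i ∈ Finset.univ.filter (fun i : Fin r => i < g), (lam i ρ - lam i (h-1)) :=
      Finset.sum_congr rfl fun i _ => hZ i
    have eW : ∑ i ∈ Finset.univ.filter (fun i : Fin r => g < i),
        ((Finset.range (lam i ρ)).filter (fun c'' => conjPart (lam i) c'' ≤ h)).card
        = ∑ i ∈ Finset.univ.filter (fun i : Fin r => g < i), (lam i ρ - lam i h) :=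
      Finset.sum_congr rfl fun i _ => hW i
    rw [eZ, eW, hFapp, hc'v]
    omega
end
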